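/- arXiv:1401.3495 — 9 statements merged into one kernel-verified Lean document; each statement's English description precedes it below -/
import Mathlib

section
/- For any positive integer r and any real numbers a_1,...,a_r, b all in [0,1], the inequality ∏_{i=1}^r (a_i + b(1-a_i)) ≥ (1-b^r) ∏_{i=1}^r a_i + b^r holds. -/
lemma aux_stmt0 (b : ℝ) (hb0 : 0 ≤ b) (hb1 : b ≤ 1) {ι : Type*} (a : ι → ℝ)
    (ha : ∀ i, 0 ≤ a i ∧ a i ≤ 1) (s : Finset ι) :
    (1 - b ^ s.card) * ∏ i ∈ s, a i + b ^ s.card ≤ ∏ i ∈ s, (a i + b * (1 - a i)) := by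
  induction s using Finset.cons_induction with
  | empty => simp
  | cons j s hj ih =>
    rw [Finset.prod_cons, Finset.prod_cons, Finset.card_cons]
    set Q := ∏ i ∈ s, a i with hQ
    have hQ0 : 0 ≤ Q := Finset.prod_nonneg fun i _ => (ha i).1
    have hQ1 : Q ≤ 1 := Finset.prod_le_one (fun i _ => (ha i).1) (fun i _ => (ha i).2)
    have hbr0 : 0 ≤ b ^ s.card := pow_nonneg hb0 _
    have hbr1 : b ^ s.card ≤ 1 := pow_le_one₀ hb0 hb1
    have hj0 := (ha j).1
    have hj1 := (ha j).2
    have hf0 : 0 ≤ a j + b * (1 - a j) := by nlinarith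
    have h1 : (1 - b ^ (s.card + 1)) * (a j * Q) + b ^ (s.card + 1) ≤
        (a j + b * (1 - a j)) * ((1 - b ^ s.card) * Q + b ^ s.card) := by
      have key : 0 ≤ b * (1 - b ^ s.card) * (Q * (1 - a j)) +
          b ^ s.card * (1 - b) * (a j * (1 - Q)) := by
        have h2 : 0 ≤ b * (1 - b ^ s.card) * (Q * (1 - a j)) :=
          mul_nonneg (mul_nonneg hb0 (by linarith)) (mul_nonneg hQ0 (by linarith))
        have h3 : 0 ≤ b ^ s.card * (1 - b) * (a j * (1 - Q)) :=
          mul_nonneg (mul_nonneg hbr0 (by linarith)) (mul_nonneg hj0 (by linarith))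
        linarith
      ring_nf
      ring_nf at key
      nlinarith [key]
    calc (1 - b ^ (s.card + 1)) * (a j * Q) + b ^ (s.card + 1)
        ≤ (a j + b * (1 - a j)) * ((1 - b ^ s.card) * Q + b ^ s.card) := h1
      _ ≤ (a j + b * (1 - a j)) * ∏ i ∈ s, (a i + b * (1 - a i)) :=
          mul_le_mul_of_nonneg_left ih hf0

theorem stmt_0 (r : ℕ) (hr : 0 < r) (a : Fin r → ℝ) (b : ℝ)
    (ha : ∀ i, a i ∈ Set.Icc (0:ℝ) 1) (hb : b ∈ Set.Icc (0:ℝ) 1) :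
    (∏ i, (a i + b * (1 - a i))) ≥ (1 - b ^ r) * ∏ i, a i + b ^ r := by
  have := aux_stmt0 b hb.1 hb.2 a (fun i => ⟨(ha i).1, (ha i).2⟩) Finset.univ
  simpa [Finset.card_univ] using this
end

section
/- For every x ∈ [0,1] and p ∈ (0,1), x(1-x) (log((x/p)/((1-x)/(1-p))))² ≤ (2 + (1/2)|log(p/(1-p))|)². -/
lemma aux_sqrt_log (t : ℝ) (ht : 0 < t) (ht1 : t ≤ 1) :
    Real.sqrt t * |Real.log t| ≤ 2 - 2 * Real.sqrt t := by
  have hst : 0 < Real.sqrt t := Real.sqrt_pos.mpr ht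
  have hlog : Real.log t ≤ 0 := Real.log_nonpos ht.le ht1
  rw [abs_of_nonpos hlog]
  have h1 : Real.log (1 / Real.sqrt t) ≤ 1 / Real.sqrt t - 1 :=
    Real.log_le_sub_one_of_pos (by positivity)
  have h2 : Real.log (1 / Real.sqrt t) = -(Real.log t / 2) := by
    rw [Real.log_div one_ne_zero (ne_of_gt hst), Real.log_one, Real.log_sqrt ht.le]; ring
  rw [h2] at h1
  have h3 := mul_le_mul_of_nonneg_left h1 hst.le
  have h4 : Real.sqrt t * (1 / Real.sqrt t - 1) = 1 - Real.sqrt t := by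
    field_simp
  calc Real.sqrt t * -Real.log t = 2 * (Real.sqrt t * -(Real.log t / 2)) := by ring
    _ ≤ 2 * (Real.sqrt t * (1 / Real.sqrt t - 1)) := by linarith
    _ = 2 - 2 * Real.sqrt t := by rw [h4]; ring

theorem stmt_6 (x p : ℝ) (hx : x ∈ Set.Icc (0:ℝ) 1) (hp : p ∈ Set.Ioo (0:ℝ) 1) :
    x * (1 - x) * (Real.log ((x / p) / ((1 - x) / (1 - p)))) ^ 2
      ≤ (2 + (1 / 2) * |Real.log (p / (1 - p))|) ^ 2 := by
  obtain ⟨hx0, hx1⟩ := hx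
  obtain ⟨hp0, hp1⟩ := hp
  have hR : (0:ℝ) ≤ 2 + (1 / 2) * |Real.log (p / (1 - p))| := by positivity
  rcases eq_or_lt_of_le hx0 with h0 | h0
  · rw [← h0]; simpa using by positivity
  rcases eq_or_lt_of_le hx1 with h1 | h1
  · rw [h1]; simpa using by positivity
  -- now 0 < x < 1
  have hx1' : 0 < 1 - x := by linarith
  have hp1' : 0 < 1 - p := by linarith
  have hsx : 0 < Real.sqrt x := Real.sqrt_pos.mpr h0
  have hsx1 : 0 < Real.sqrt (1 - x) := Real.sqrt_pos.mpr hx1'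
  have hsxle : Real.sqrt x ≤ 1 := Real.sqrt_le_one.mpr h1.le
  have hsx1le : Real.sqrt (1 - x) ≤ 1 := Real.sqrt_le_one.mpr (by linarith)
  have hprod : Real.sqrt x * Real.sqrt (1 - x) ≤ 1 / 2 := by
    nlinarith [sq_nonneg (Real.sqrt x - Real.sqrt (1 - x)),
      Real.sq_sqrt h0.le, Real.sq_sqrt hx1'.le]
  have hsum : 1 ≤ Real.sqrt x + Real.sqrt (1 - x) := by
    nlinarith [Real.sq_sqrt h0.le, Real.sq_sqrt hx1'.le, Real.sqrt_nonneg x,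
      Real.sqrt_nonneg (1 - x), hsxle, hsx1le]
  set L := Real.log ((x / p) / ((1 - x) / (1 - p))) with hL
  have hLeq : L = Real.log x - Real.log (1 - x) - (Real.log p - Real.log (1 - p)) := by
    rw [hL, Real.log_div (by positivity) (by positivity),
      Real.log_div (ne_of_gt h0) (ne_of_gt hp0),
      Real.log_div (ne_of_gt hx1') (ne_of_gt hp1')]
    ring
  have hlogpq : Real.log (p / (1 - p)) = Real.log p - Real.log (1 - p) :=
    Real.log_div (ne_of_gt hp0) (ne_of_gt hp1')
  have key : Real.sqrt x * Real.sqrt (1 - x) * |L| ≤ 2 + (1 / 2) * |Real.log (p / (1 - p))| := by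
    have hx_log := aux_sqrt_log x h0 h1.le
    have hx1_log := aux_sqrt_log (1 - x) hx1' (by linarith)
    have habs : |L| ≤ |Real.log x| + |Real.log (1 - x)| + |Real.log (p / (1 - p))| := by
      rw [hLeq, hlogpq]
      calc |Real.log x - Real.log (1 - x) - (Real.log p - Real.log (1 - p))|
          ≤ |Real.log x - Real.log (1 - x)| + |Real.log p - Real.log (1 - p)| :=
            abs_sub _ _
        _ ≤ |Real.log x| + |Real.log (1 - x)| + |Real.log p - Real.log (1 - p)| := by
            have := abs_sub (Real.log x) (Real.log (1 - x)); linarith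
    have h5 : Real.sqrt x * Real.sqrt (1 - x) * |L|
        ≤ Real.sqrt x * Real.sqrt (1 - x) * (|Real.log x| + |Real.log (1 - x)| + |Real.log (p / (1 - p))|) :=
      mul_le_mul_of_nonneg_left habs (by positivity)
    have h6 : Real.sqrt x * Real.sqrt (1 - x) * |Real.log x| ≤ Real.sqrt x * |Real.log x| :=
      mul_le_mul_of_nonneg_right (mul_le_of_le_one_right hsx.le hsx1le) (abs_nonneg _)
    have h7 : Real.sqrt x * Real.sqrt (1 - x) * |Real.log (1 - x)|
        ≤ Real.sqrt (1 - x) * |Real.log (1 - x)| :=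
      mul_le_mul_of_nonneg_right (mul_le_of_le_one_left hsx1.le hsxle) (abs_nonneg _)
    have h8 : Real.sqrt x * Real.sqrt (1 - x) * |Real.log (p / (1 - p))|
        ≤ (1 / 2) * |Real.log (p / (1 - p))| :=
      mul_le_mul_of_nonneg_right hprod (abs_nonneg _)
    nlinarith
  have hLHS : x * (1 - x) * L ^ 2 = (Real.sqrt x * Real.sqrt (1 - x) * |L|) ^ 2 := by
    rw [mul_pow, mul_pow, sq_abs, Real.sq_sqrt h0.le, Real.sq_sqrt hx1'.le]
  rw [hLHS]
  exact pow_le_pow_left₀ (by positivity) key 2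
end

section
/- Let f: [0,1]^n → ℝ be twice continuously differentiable with ‖∂²f/∂x_i²‖_∞ ≤ c_{ii}. Let F = log ∑_{x∈{0,1}^n} e^{f(x)} and I(y) = ∑_i (y_i log y_i + (1-y_i) log(1-y_i)). Then F ≥ sup_{y∈[0,1]^n} (f(y) − I(y)) − (1/2) ∑_{i=1}^n c_{ii}. -/
open Finset

private def wgt {n : ℕ} (y : Fin n → ℝ) (x : Fin n → Bool) : ℝ :=
  ∏ i, (if x i then y i else 1 - y i)

private lemma sum_wgt {n : ℕ} (y : Fin n → ℝ) : ∑ x : Fin n → Bool, wgt y x = 1 := by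
  have h := Finset.prod_univ_sum (fun _ : Fin n => (univ : Finset Bool))
    (fun i b => if b then y i else 1 - y i)
  simp only [Fintype.piFinset_univ] at h
  unfold wgt
  rw [← h]
  simp

private lemma marginal {n : ℕ} (y : Fin n → ℝ) (i : Fin n) (F : Bool → ℝ) :
    ∑ x : Fin n → Bool, wgt y x * F (x i)
      = (1 - y i) * F false + y i * F true := by
  have h := Finset.prod_univ_sum (fun _ : Fin n => (univ : Finset Bool))
    (fun j b => (if b then y j else 1 - y j) * (if j = i then F b else 1))
  simp only [Fintype.piFinset_univ] at h
  have e1 : ∀ x : Fin n → Bool,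
      wgt y x * F (x i) = ∏ j, (if x j then y j else 1 - y j) * (if j = i then F (x j) else 1) := by
    intro x
    rw [Finset.prod_mul_distrib]
    unfold wgt
    congr 1
    rw [Finset.prod_eq_single i (by intro b _ hb; simp [hb]) (by simp)]
    simp
  calc ∑ x : Fin n → Bool, wgt y x * F (x i)
      = ∑ x : Fin n → Bool, ∏ j, (if x j then y j else 1 - y j) * (if j = i then F (x j) else 1) :=
        Finset.sum_congr rfl (fun x _ => e1 x)
    _ = ∏ j, ∑ b : Bool, (if b then y j else 1 - y j) * (if j = i then F b else 1) := h.symm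
    _ = (1 - y i) * F false + y i * F true := by
        rw [Finset.prod_eq_single i ?_ (by simp)]
        · simp; ring
        · intro j _ hj; simp [hj]

private lemma wgt_nonneg {n : ℕ} {y : Fin n → ℝ} (hy : y ∈ Set.Icc (0 : Fin n → ℝ) 1)
    (x : Fin n → Bool) : 0 ≤ wgt y x := by
  apply Finset.prod_nonneg
  intro i _
  rcases hy with ⟨h0, h1⟩
  have h0i := Pi.le_def.mp h0 i
  have h1i := Pi.le_def.mp h1 i
  simp only [Pi.zero_apply] at h0i
  simp only [Pi.one_apply] at h1i
  cases x i <;> simp <;> linarith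

private lemma entropy_eq {n : ℕ} (y : Fin n → ℝ) :
    ∑ x : Fin n → Bool, wgt y x * Real.log (wgt y x)
      = ∑ i, (y i * Real.log (y i) + (1 - y i) * Real.log (1 - y i)) := by
  have key : ∀ x : Fin n → Bool,
      wgt y x * Real.log (wgt y x)
        = ∑ i, wgt y x * Real.log (if x i then y i else 1 - y i) := by
    intro x
    by_cases hw : wgt y x = 0
    · simp [hw]
    · rw [← Finset.mul_sum]
      congr 1
      rw [wgt, Real.log_prod]
      intro i _
      exact fun h => hw (Finset.prod_eq_zero (Finset.mem_univ i) h)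
  rw [Finset.sum_congr rfl (fun x _ => key x), Finset.sum_comm]
  apply Finset.sum_congr rfl
  intro i _
  have := marginal y i (fun b => Real.log (if b then y i else 1 - y i))
  simp only at this
  rw [this]
  simp; ring

private lemma gibbs {ι : Type*} [Fintype ι] (w v : ι → ℝ) (hw : ∀ x, 0 ≤ w x)
    (hs : ∑ x, w x = 1) :
    ∑ x, w x * v x - ∑ x, w x * Real.log (w x) ≤ Real.log (∑ x, Real.exp (v x)) := by
  classical
  set S : Finset ι := univ.filter (fun x => w x ≠ 0) with hSdef
  have hS1 : ∑ x ∈ S, w x = 1 := by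
    rw [hSdef, Finset.sum_filter_ne_zero]; exact hs
  have hSne : S.Nonempty := by
    by_contra h
    rw [Finset.not_nonempty_iff_eq_empty] at h
    rw [h] at hS1; simp at hS1
  have hwpos : ∀ x ∈ S, 0 < w x := by
    intro x hx
    rw [hSdef, Finset.mem_filter] at hx
    exact lt_of_le_of_ne (hw x) (Ne.symm hx.2)
  have hcc : ConcaveOn ℝ (Set.Ioi 0) Real.log := strictConcaveOn_log_Ioi.concaveOn
  have jensen := hcc.le_map_sum (t := S) (w := w) (p := fun x => Real.exp (v x) / w x)
    (fun x _ => hw x) hS1 (fun x hx => Set.mem_Ioi.mpr (div_pos (Real.exp_pos _) (hwpos x hx)))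
  simp only [smul_eq_mul] at jensen
  have e1 : ∑ x ∈ S, w x * (Real.exp (v x) / w x) = ∑ x ∈ S, Real.exp (v x) := by
    apply Finset.sum_congr rfl
    intro x hx
    rw [mul_div_cancel₀ _ (ne_of_gt (hwpos x hx))]
  have e2 : ∀ x ∈ S, w x * Real.log (Real.exp (v x) / w x)
      = w x * v x - w x * Real.log (w x) := by
    intro x hx
    rw [Real.log_div (Real.exp_ne_zero _) (ne_of_gt (hwpos x hx)), Real.log_exp]
    ring
  have e3 : ∑ x, w x * v x = ∑ x ∈ S, w x * v x := by
    rw [hSdef]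
    exact (Finset.sum_filter_of_ne (by intro x _ h hw0; exact h (by rw [hw0]; ring))).symm
  have e4 : ∑ x, w x * Real.log (w x) = ∑ x ∈ S, w x * Real.log (w x) := by
    rw [hSdef]
    exact (Finset.sum_filter_of_ne (by intro x _ h hw0; exact h (by rw [hw0]; ring))).symm
  have step1 : ∑ x, w x * v x - ∑ x, w x * Real.log (w x)
      ≤ Real.log (∑ x ∈ S, Real.exp (v x)) := by
    rw [e3, e4, ← Finset.sum_sub_distrib]
    calc ∑ x ∈ S, (w x * v x - w x * Real.log (w x))
        = ∑ x ∈ S, w x * Real.log (Real.exp (v x) / w x) :=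
          (Finset.sum_congr rfl e2).symm
      _ ≤ Real.log (∑ x ∈ S, w x * (Real.exp (v x) / w x)) := jensen
      _ = Real.log (∑ x ∈ S, Real.exp (v x)) := by rw [e1]
  refine step1.trans (Real.log_le_log ?_ ?_)
  · exact Finset.sum_pos (fun x _ => Real.exp_pos _) hSne
  · exact Finset.sum_le_sum_of_subset_of_nonneg (Finset.filter_subset _ _)
      (fun x _ _ => le_of_lt (Real.exp_pos _))

private lemma update_mem_Icc {n : ℕ} {y : Fin n → ℝ} (hy : y ∈ Set.Icc (0 : Fin n → ℝ) 1)
    (k : Fin n) {t : ℝ} (ht : t ∈ Set.Icc (0:ℝ) 1) :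
    Function.update y k t ∈ Set.Icc (0 : Fin n → ℝ) 1 := by
  obtain ⟨hy0, hy1⟩ := hy
  constructor <;> intro i <;> by_cases hik : i = k
  · subst hik; simpa [Function.update_self] using ht.1
  · simpa [Function.update_of_ne hik] using Pi.le_def.mp hy0 i
  · subst hik; simpa [Function.update_self] using ht.2
  · simpa [Function.update_of_ne hik] using Pi.le_def.mp hy1 i

private lemma wgt_update {n : ℕ} (y : Fin n → ℝ) (k : Fin n) (t : ℝ) (x : Fin n → Bool) :
    wgt (Function.update y k t) x
      = (if x k then t else 1 - t) * ∏ i ∈ univ.erase k, (if x i then y i else 1 - y i) := by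
  rw [wgt, ← Finset.mul_prod_erase univ _ (Finset.mem_univ k)]
  congr 1
  · simp [Function.update_self]
  · exact Finset.prod_congr rfl fun i hi => by
      rw [Function.update_of_ne (Finset.ne_of_mem_erase hi)]

private lemma coord_bound {n : ℕ} (f : (Fin n → ℝ) → ℝ) (hf : ContDiff ℝ 2 f)
    (k : Fin n) (ck : ℝ)
    (hck : ∀ x ∈ Set.Icc (0 : Fin n → ℝ) 1,
      |fderiv ℝ (fun z => fderiv ℝ f z (Pi.single k 1)) x (Pi.single k 1)| ≤ ck)
    {y : Fin n → ℝ} (hy : y ∈ Set.Icc (0 : Fin n → ℝ) 1) :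
    f y ≤ (1 - y k) * f (Function.update y k 0) + y k * f (Function.update y k 1) + ck / 2 := by
  obtain ⟨hy0, hy1⟩ := hy
  have hck0 : 0 ≤ ck := le_trans (abs_nonneg _) (hck 0 ⟨le_rfl, by intro i; norm_num⟩)
  set e : Fin n → ℝ := Pi.single k 1 with he
  set L : ℝ → (Fin n → ℝ) := fun t => Function.update y k 0 + t • e with hL
  have hL_eq : ∀ t, L t = Function.update y k t := by
    intro t; funext i
    by_cases hik : i = k
    · subst hik
      simp [hL, he, Function.update_self, Pi.single_eq_same]
    · simp [hL, he, Function.update_of_ne hik, Pi.single_eq_of_ne hik]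
  have hL_mem : ∀ t ∈ Set.Icc (0:ℝ) 1, L t ∈ Set.Icc (0 : Fin n → ℝ) 1 := by
    intro t ht
    rw [hL_eq]
    constructor <;> intro i <;> by_cases hik : i = k
    · subst hik; simpa [Function.update_self] using ht.1
    · simpa [Function.update_of_ne hik] using Pi.le_def.mp hy0 i
    · subst hik; simpa [Function.update_self] using ht.2
    · simpa [Function.update_of_ne hik] using Pi.le_def.mp hy1 i
  have hLd : ∀ t : ℝ, HasDerivAt L e t := by
    intro t
    have : HasDerivAt (fun t : ℝ => t • e) ((1:ℝ) • e) t := (hasDerivAt_id t).smul_const e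
    simpa [hL] using this.const_add (Function.update y k 0)
  set G : (Fin n → ℝ) → ℝ := fun z => fderiv ℝ f z e with hG
  have hGc : ContDiff ℝ 1 G := by
    have h1 : ContDiff ℝ 1 (fderiv ℝ f) := hf.fderiv_right (by norm_num)
    exact (ContinuousLinearMap.apply ℝ ℝ e).contDiff.comp h1
  set g : ℝ → ℝ := fun t => f (L t) with hg
  have hgd : ∀ t : ℝ, HasDerivAt g (G (L t)) t := by
    intro t
    exact ((hf.differentiable (by norm_num) (L t)).hasFDerivAt).comp_hasDerivAt t (hLd t)
  have hgd2 : ∀ t : ℝ, HasDerivAt (fun t => G (L t)) (fderiv ℝ G (L t) e) t := by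
    intro t
    exact ((hGc.differentiable (by norm_num) (L t)).hasFDerivAt).comp_hasDerivAt t (hLd t)
  set h : ℝ → ℝ := fun t => g t + ck / 2 * t ^ 2 with hh
  have hhd : ∀ t : ℝ, HasDerivAt h (G (L t) + ck * t) t := by
    intro t
    have hq : HasDerivAt (fun t : ℝ => ck / 2 * t ^ 2) (ck * t) t := by
      have := (hasDerivAt_pow 2 t).const_mul (ck / 2)
      refine this.congr_deriv ?_
      ring
    exact (hgd t).add hq
  have hderivh : deriv h = fun t => G (L t) + ck * t := funext fun t => (hhd t).deriv
  have hhd2 : ∀ t : ℝ, HasDerivAt (deriv h) (fderiv ℝ G (L t) e + ck) t := by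
    intro t
    rw [hderivh]
    exact (hgd2 t).add ((hasDerivAt_id t).const_mul ck |>.congr_deriv (by ring))
  have hcvx : ConvexOn ℝ (Set.Icc (0:ℝ) 1) h := by
    apply convexOn_of_deriv2_nonneg (convex_Icc 0 1)
    · exact Continuous.continuousOn
        (continuous_iff_continuousAt.mpr fun t => ((hhd t).differentiableAt).continuousAt)
    · exact fun t _ => ((hhd t).differentiableAt).differentiableWithinAt
    · exact fun t _ => ((hhd2 t).differentiableAt).differentiableWithinAt
    · intro t ht
      rw [interior_Icc] at ht
      have h2 : deriv^[2] h t = deriv (deriv h) t := rfl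
      rw [h2, (hhd2 t).deriv]
      have := abs_le.mp (hck (L t) (hL_mem t ⟨le_of_lt ht.1, le_of_lt ht.2⟩))
      linarith [this.1]
  have hyk0 : 0 ≤ y k := Pi.le_def.mp hy0 k
  have hyk1 : y k ≤ 1 := Pi.le_def.mp hy1 k
  have key := hcvx.2 (Set.mem_Icc.mpr ⟨le_rfl, zero_le_one⟩)
    (Set.mem_Icc.mpr ⟨zero_le_one, le_rfl⟩)
    (by linarith : (0:ℝ) ≤ 1 - y k) hyk0 (by ring)
  simp only [smul_eq_mul, mul_zero, mul_one, zero_add] at key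
  have hval : h (y k) = f y + ck / 2 * (y k) ^ 2 := by
    simp only [hh, hg, hL_eq, Function.update_eq_self]
  have hval0 : h 0 = f (Function.update y k 0) := by
    simp [hh, hg, hL_eq]
  have hval1 : h 1 = f (Function.update y k 1) + ck / 2 := by
    simp [hh, hg, hL_eq]
  rw [hval, hval0, hval1] at key
  nlinarith [key, mul_nonneg hyk0 (by linarith : (0:ℝ) ≤ 1 - y k)]

private lemma sum_wgt_f_ge {n : ℕ} (f : (Fin n → ℝ) → ℝ) (hf : ContDiff ℝ 2 f)
    (c : Fin n → ℝ)
    (hc : ∀ i, ∀ x ∈ Set.Icc (0 : Fin n → ℝ) 1,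
      |fderiv ℝ (fun z => fderiv ℝ f z (Pi.single i 1)) x (Pi.single i 1)| ≤ c i)
    (s : Finset (Fin n)) :
    ∀ y ∈ Set.Icc (0 : Fin n → ℝ) 1, (∀ i ∉ s, y i = 0 ∨ y i = 1) →
      f y - (1/2) * ∑ i ∈ s, c i
        ≤ ∑ x : Fin n → Bool, wgt y x * f (fun i => if x i then 1 else 0) := by
  classical
  induction s using Finset.induction_on with
  | empty =>
      intro y hy hfree
      set x₀ : Fin n → Bool := fun i => if y i = 1 then true else false with hx₀
      have hbx : (fun i => if x₀ i then (1:ℝ) else 0) = y := by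
        funext i
        rcases hfree i (Finset.notMem_empty i) with h | h <;> simp [hx₀, h]
      have hw1 : wgt y x₀ = 1 := by
        rw [wgt]
        apply Finset.prod_eq_one
        intro i _
        rcases hfree i (Finset.notMem_empty i) with h | h <;> simp [hx₀, h]
      have hz : ∀ x : Fin n → Bool, x ≠ x₀ → wgt y x = 0 := by
        intro x hx
        obtain ⟨i, hi⟩ := Function.ne_iff.mp hx
        apply Finset.prod_eq_zero (Finset.mem_univ i)
        rcases hfree i (Finset.notMem_empty i) with h | h
        · have : x₀ i = false := by simp [hx₀, h]
          rw [this] at hi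
          have : x i = true := by simpa using hi
          simp [this, h]
        · have : x₀ i = true := by simp [hx₀, h]
          rw [this] at hi
          have : x i = false := by simpa using hi
          simp [this, h]
      have : ∑ x : Fin n → Bool, wgt y x * f (fun i => if x i then 1 else 0)
          = wgt y x₀ * f (fun i => if x₀ i then 1 else 0) := by
        apply Finset.sum_eq_single x₀
        · intro x _ hx; rw [hz x hx]; ring
        · intro h; exact absurd (Finset.mem_univ x₀) h
      rw [this, hw1, hbx, one_mul]
      simp
  | @insert k s hk ih =>
      intro y hy hfree
      have hyk0 : 0 ≤ y k := Pi.le_def.mp hy.1 k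
      have hyk1 : y k ≤ 1 := Pi.le_def.mp hy.2 k
      set y0 := Function.update y k 0 with hy0def
      set y1 := Function.update y k 1 with hy1def
      have hy0mem := update_mem_Icc hy k (Set.mem_Icc.mpr ⟨le_rfl, zero_le_one⟩)
      have hy1mem := update_mem_Icc hy k (Set.mem_Icc.mpr ⟨zero_le_one, le_rfl⟩)
      have hfree0 : ∀ i ∉ s, y0 i = 0 ∨ y0 i = 1 := by
        intro i hi
        by_cases hik : i = k
        · subst hik; left; simp [hy0def]
        · rw [hy0def, Function.update_of_ne hik]
          exact hfree i (by simp [hik, hi])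
      have hfree1 : ∀ i ∉ s, y1 i = 0 ∨ y1 i = 1 := by
        intro i hi
        by_cases hik : i = k
        · subst hik; right; simp [hy1def]
        · rw [hy1def, Function.update_of_ne hik]
          exact hfree i (by simp [hik, hi])
      have ih0 := ih y0 hy0mem hfree0
      have ih1 := ih y1 hy1mem hfree1
      have hsplit : ∀ x : Fin n → Bool,
          wgt y x = (1 - y k) * wgt y0 x + y k * wgt y1 x := by
        intro x
        have h0 := wgt_update y k 0 x
        have h1 := wgt_update y k 1 x
        have hyk := wgt_update y k (y k) x
        rw [Function.update_eq_self] at hyk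
        rw [← hy0def] at h0
        rw [← hy1def] at h1
        rw [hyk, h0, h1]
        cases x k <;> simp <;> ring
      have hA : ∑ x : Fin n → Bool, wgt y x * f (fun i => if x i then 1 else 0)
          = (1 - y k) * ∑ x : Fin n → Bool, wgt y0 x * f (fun i => if x i then 1 else 0)
            + y k * ∑ x : Fin n → Bool, wgt y1 x * f (fun i => if x i then 1 else 0) := by
        rw [Finset.mul_sum, Finset.mul_sum, ← Finset.sum_add_distrib]
        apply Finset.sum_congr rfl
        intro x _
        rw [hsplit x]; ring
      have hcb := coord_bound f hf k (c k) (hc k) hy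
      rw [← hy0def, ← hy1def] at hcb
      rw [hA, Finset.sum_insert hk]
      nlinarith [mul_le_mul_of_nonneg_left ih0 (by linarith : (0:ℝ) ≤ 1 - y k),
        mul_le_mul_of_nonneg_left ih1 hyk0]

theorem stmt_8 (n : ℕ) (f : (Fin n → ℝ) → ℝ) (hf : ContDiff ℝ 2 f)
    (c : Fin n → ℝ)
    (hc : ∀ i, ∀ x ∈ Set.Icc (0 : Fin n → ℝ) 1,
      |fderiv ℝ (fun z => fderiv ℝ f z (Pi.single i 1)) x (Pi.single i 1)| ≤ c i) :
    ∀ y ∈ Set.Icc (0 : Fin n → ℝ) 1,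
      Real.log (∑ x : Fin n → Bool, Real.exp (f (fun i => if x i then 1 else 0)))
        ≥ (f y - ∑ i, (y i * Real.log (y i) + (1 - y i) * Real.log (1 - y i)))
          - (1 / 2) * ∑ i, c i := by
  intro y hy
  have hg := gibbs (wgt y) (fun x => f (fun i => if x i then 1 else 0))
    (wgt_nonneg hy) (sum_wgt y)
  rw [entropy_eq y] at hg
  have hmain := sum_wgt_f_ge f hf c hc univ y hy (fun i hi => absurd (Finset.mem_univ i) hi)
  rw [ge_iff_le]
  linarith
end

section
/- Let Y_1,...,Y_n be independent with Y_i ~ Bernoulli(z_i), and let S := f(Y) − f(z) for a C² function f: [0,1]^n → ℝ with ‖f‖_∞ ≤ a, ‖∂f/∂x_i‖_∞ ≤ b_i, ‖∂²f/∂x_i²‖_∞ ≤ c_{ii}. Then E[S²] ≤ ∑_{i=1}^n (a c_{ii} + b_i²). -/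
open Set Finset

lemma mvt_bound {u u' : ℝ → ℝ} {s : Set ℝ} (hs : Convex ℝ s)
    (hd : ∀ t ∈ s, HasDerivWithinAt u (u' t) s t) {C : ℝ}
    (hC : ∀ t ∈ s, |u' t| ≤ C) {x y : ℝ} (hx : x ∈ s) (hy : y ∈ s) :
    |u x - u y| ≤ C * |x - y| := by
  have := Convex.norm_image_sub_le_of_norm_hasDerivWithin_le hd
    (fun t ht => by simpa [Real.norm_eq_abs] using hC t ht) hs hy hx
  simpa [Real.norm_eq_abs] using this

lemma taylor_bound {u u' u'' : ℝ → ℝ} {c : ℝ}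
    (hd : ∀ t ∈ Icc (0:ℝ) 1, HasDerivWithinAt u (u' t) (Icc 0 1) t)
    (hd2 : ∀ t ∈ Icc (0:ℝ) 1, HasDerivWithinAt u' (u'' t) (Icc 0 1) t)
    (hc : ∀ t ∈ Icc (0:ℝ) 1, |u'' t| ≤ c)
    {p x : ℝ} (hp : p ∈ Icc (0:ℝ) 1) (hx : x ∈ Icc (0:ℝ) 1) :
    |u x - u p - (x - p) * u' p| ≤ c * (x - p)^2 := by
  set s : Set ℝ := uIcc p x with hs
  have hsub : s ⊆ Icc 0 1 := by
    rw [hs, Set.uIcc_eq_union]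
    rintro t (ht | ht)
    · exact Icc_subset_Icc hp.1 hx.2 ht
    · exact Icc_subset_Icc hx.1 hp.2 ht
  have hconv : Convex ℝ s := convex_uIcc p x
  have hps : p ∈ s := Set.left_mem_uIcc
  have hxs : x ∈ s := Set.right_mem_uIcc
  have habs : ∀ t ∈ s, |t - p| ≤ |x - p| := by
    intro t ht
    rw [Set.mem_uIcc] at ht
    rcases ht with ⟨h1, h2⟩ | ⟨h1, h2⟩ <;> rw [abs_le] <;>
      constructor <;> [skip; skip; skip; skip] <;>
      cases' (abs_sub_le_iff.mp (le_refl |x - p|)) with _ _ <;>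
      · rcases le_or_gt p x with h | h <;>
        · have := le_abs_self (x - p); have := neg_abs_le (x - p); linarith
  -- |u' t - u' p| ≤ c * |x - p| on s
  have hstep1 : ∀ t ∈ s, |u' t - u' p| ≤ c * |x - p| := by
    intro t ht
    have h1 : |u' t - u' p| ≤ c * |t - p| :=
      mvt_bound hconv (fun r hr => (hd2 r (hsub hr)).mono hsub)
        (fun r hr => hc r (hsub hr)) ht hps
    have hc0 : 0 ≤ c := le_trans (abs_nonneg _) (hc p hp)
    calc |u' t - u' p| ≤ c * |t - p| := h1
      _ ≤ c * |x - p| := by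
          exact mul_le_mul_of_nonneg_left (habs t ht) hc0
  -- w t = u t - t * u' p
  have hw : ∀ t ∈ s, HasDerivWithinAt (fun r => u r - r * u' p) (u' t - u' p) s t := by
    intro t ht
    have h := ((hd t (hsub ht)).mono hsub).sub ((hasDerivWithinAt_id t s).mul_const (u' p))
    rw [one_mul] at h
    exact h
  have := mvt_bound hconv hw hstep1 hxs hps
  have heq : (u x - x * u' p) - (u p - p * u' p) = u x - u p - (x - p) * u' p := by ring
  rw [heq] at this
  calc |u x - u p - (x - p) * u' p| ≤ c * |x - p| * |x - p| := this
    _ = c * (x - p)^2 := by rw [mul_assoc, ← abs_mul, ← sq, abs_of_nonneg (sq_nonneg _)]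

lemma onepoint {u0 u1 up d p A b c : ℝ} (hp0 : 0 ≤ p) (hp1 : p ≤ 1)
    (hA : |up| ≤ A) (h1 : |u1 - up| ≤ b * (1 - p)) (h0 : |u0 - up| ≤ b * p)
    (t1 : |u1 - up - (1 - p) * d| ≤ c * (1 - p)^2) (t0 : |u0 - up - (0 - p) * d| ≤ c * p^2)
    (hb : 0 ≤ b) (hc : 0 ≤ c) :
    p * u1^2 + (1 - p) * u0^2 ≤ up^2 + (b^2 / 4 + A * c / 2) := by
  have hq0 : (0:ℝ) ≤ 1 - p := by linarith
  have hA0 : 0 ≤ A := le_trans (abs_nonneg _) hA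
  have hs1 : (u1 - up)^2 ≤ (b * (1 - p))^2 := by nlinarith [sq_abs (u1 - up), abs_nonneg (u1 - up)]
  have hs0 : (u0 - up)^2 ≤ (b * p)^2 := by nlinarith [sq_abs (u0 - up), abs_nonneg (u0 - up)]
  have hsq : p * (u1 - up)^2 + (1 - p) * (u0 - up)^2 ≤ b^2 * (p * (1 - p)) := by
    nlinarith [mul_le_mul_of_nonneg_left hs1 hp0, mul_le_mul_of_nonneg_left hs0 hq0]
  have hcross : |p * (u1 - up) + (1 - p) * (u0 - up)| ≤ c * (p * (1 - p)) := by
    have e : p * (u1 - up) + (1 - p) * (u0 - up)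
        = p * (u1 - up - (1 - p) * d) + (1 - p) * (u0 - up - (0 - p) * d) := by ring
    rw [e]
    calc |p * (u1 - up - (1 - p) * d) + (1 - p) * (u0 - up - (0 - p) * d)|
        ≤ |p * (u1 - up - (1 - p) * d)| + |(1 - p) * (u0 - up - (0 - p) * d)| := abs_add_le _ _
      _ = p * |u1 - up - (1 - p) * d| + (1 - p) * |u0 - up - (0 - p) * d| := by
          rw [abs_mul, abs_mul, abs_of_nonneg hp0, abs_of_nonneg hq0]
      _ ≤ p * (c * (1 - p)^2) + (1 - p) * (c * p^2) := by gcongr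
      _ = c * (p * (1 - p)) := by ring
  have hup : up * (p * (u1 - up) + (1 - p) * (u0 - up)) ≤ A * (c * (p * (1 - p))) := by
    calc up * (p * (u1 - up) + (1 - p) * (u0 - up))
        ≤ |up * (p * (u1 - up) + (1 - p) * (u0 - up))| := le_abs_self _
      _ = |up| * |p * (u1 - up) + (1 - p) * (u0 - up)| := abs_mul _ _
      _ ≤ A * (c * (p * (1 - p))) := mul_le_mul hA hcross (abs_nonneg _) hA0
  have key : p * u1^2 + (1 - p) * u0^2 - up^2
      = p * (u1 - up)^2 + (1 - p) * (u0 - up)^2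
        + 2 * (up * (p * (u1 - up) + (1 - p) * (u0 - up))) := by ring
  have hpq : p * (1 - p) ≤ 1 / 4 := by nlinarith [sq_nonneg (1 - 2 * p)]
  have hb2 : b^2 * (p * (1 - p)) ≤ b^2 * (1 / 4) :=
    mul_le_mul_of_nonneg_left hpq (sq_nonneg b)
  have hAc : A * (c * (p * (1 - p))) ≤ A * (c * (1 / 4)) :=
    mul_le_mul_of_nonneg_left (mul_le_mul_of_nonneg_left hpq hc) hA0
  linarith

lemma onecoord {n : ℕ} {f : (Fin n → ℝ) → ℝ} (hf : ContDiff ℝ 2 f)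
    {z : Fin n → ℝ} (hz : z ∈ Icc (0 : Fin n → ℝ) 1)
    {a bk ck : ℝ} (kk : Fin n)
    (ha : ∀ x ∈ Icc (0 : Fin n → ℝ) 1, |f x| ≤ a)
    (hb : ∀ x ∈ Icc (0 : Fin n → ℝ) 1, |fderiv ℝ f x (Pi.single kk 1)| ≤ bk)
    (hc : ∀ x ∈ Icc (0 : Fin n → ℝ) 1,
      |fderiv ℝ (fun w => fderiv ℝ f w (Pi.single kk 1)) x (Pi.single kk 1)| ≤ ck)
    {x : Fin n → ℝ} (hx : x ∈ Icc (0 : Fin n → ℝ) 1) :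
    z kk * (f (Function.update x kk 1) - f z)^2
      + (1 - z kk) * (f (Function.update x kk 0) - f z)^2
      ≤ (f (Function.update x kk (z kk)) - f z)^2 + (a * ck + bk^2) := by
  have hzk : z kk ∈ Icc (0:ℝ) 1 := ⟨hz.1 kk, hz.2 kk⟩
  set γ : ℝ → (Fin n → ℝ) := fun t => Function.update x kk t with hγ
  have hγmem : ∀ t ∈ Icc (0:ℝ) 1, γ t ∈ Icc (0 : Fin n → ℝ) 1 := by
    intro t ht
    constructor <;> intro j <;> by_cases h : j = kk <;>
      simp [hγ, Function.update, h] <;> first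
        | exact ht.1 | exact ht.2 | exact hx.1 j | exact hx.2 j
  have hγd : ∀ t : ℝ, HasDerivAt γ (Pi.single kk 1) t := by
    intro t
    have heq : γ = fun t => Function.update x kk 0 + t • Pi.single kk (1:ℝ) := by
      funext t j
      by_cases h : j = kk <;> simp [hγ, Function.update, h, Pi.single_apply]
    rw [heq]
    simpa using ((hasDerivAt_id t).smul_const (Pi.single kk (1:ℝ))).const_add
      (Function.update x kk 0)
  set g : (Fin n → ℝ) → ℝ := fun w => fderiv ℝ f w (Pi.single kk 1) with hg
  have hgc : ContDiff ℝ 1 g := by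
    apply ContDiff.clm_apply (ContDiff.fderiv_right hf ?_) contDiff_const
    norm_num
  set u : ℝ → ℝ := fun t => f (γ t) - f z with hu
  set u' : ℝ → ℝ := fun t => g (γ t) with hu'
  set u'' : ℝ → ℝ := fun t => fderiv ℝ g (γ t) (Pi.single kk 1) with hu''
  have hud : ∀ t : ℝ, HasDerivAt u (u' t) t := by
    intro t
    exact (((hf.differentiable (by norm_num)) (γ t)).hasFDerivAt.comp_hasDerivAt t
      (hγd t)).sub_const (f z)
  have hu'd : ∀ t : ℝ, HasDerivAt u' (u'' t) t := by
    intro t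
    exact ((hgc.differentiable (by norm_num)) (γ t)).hasFDerivAt.comp_hasDerivAt t (hγd t)
  have hbd : ∀ t ∈ Icc (0:ℝ) 1, |u' t| ≤ bk := fun t ht => hb _ (hγmem t ht)
  have hcd : ∀ t ∈ Icc (0:ℝ) 1, |u'' t| ≤ ck := by
    intro t ht
    exact hc _ (hγmem t ht)
  have had : ∀ t ∈ Icc (0:ℝ) 1, |u t| ≤ 2 * a := by
    intro t ht
    calc |u t| ≤ |f (γ t)| + |f z| := abs_sub _ _
      _ ≤ 2 * a := by have := ha _ (hγmem t ht); have := ha z hz; linarith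
  have h01 : (0:ℝ) ∈ Icc (0:ℝ) 1 := by norm_num
  have h11 : (1:ℝ) ∈ Icc (0:ℝ) 1 := by norm_num
  have hudw : ∀ t ∈ Icc (0:ℝ) 1, HasDerivWithinAt u (u' t) (Icc 0 1) t :=
    fun t _ => (hud t).hasDerivWithinAt
  have hu'dw : ∀ t ∈ Icc (0:ℝ) 1, HasDerivWithinAt u' (u'' t) (Icc 0 1) t :=
    fun t _ => (hu'd t).hasDerivWithinAt
  have hbk0 : 0 ≤ bk := le_trans (abs_nonneg _) (hbd 0 h01)
  have hck0 : 0 ≤ ck := le_trans (abs_nonneg _) (hcd 0 h01)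
  -- MVT bounds
  have hm1 : |u 1 - u (z kk)| ≤ bk * (1 - z kk) := by
    have := mvt_bound (convex_Icc (0:ℝ) 1) hudw hbd h11 ⟨hzk.1, hzk.2⟩
    have e : |(1:ℝ) - z kk| = 1 - z kk := abs_of_nonneg (by linarith [hzk.2])
    rwa [e] at this
  have hm0 : |u 0 - u (z kk)| ≤ bk * z kk := by
    have := mvt_bound (convex_Icc (0:ℝ) 1) hudw hbd h01 ⟨hzk.1, hzk.2⟩
    have e : |(0:ℝ) - z kk| = z kk := by
      rw [zero_sub, abs_neg, abs_of_nonneg hzk.1]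
    rwa [e] at this
    -- Taylor bounds
  have ht1 : |u 1 - u (z kk) - (1 - z kk) * u' (z kk)| ≤ ck * (1 - z kk)^2 :=
    taylor_bound hudw hu'dw hcd ⟨hzk.1, hzk.2⟩ h11
  have ht0 : |u 0 - u (z kk) - (0 - z kk) * u' (z kk)| ≤ ck * (z kk)^2 := by
    have := taylor_bound hudw hu'dw hcd (p := z kk) (x := 0) ⟨hzk.1, hzk.2⟩ h01
    calc |u 0 - u (z kk) - (0 - z kk) * u' (z kk)| ≤ ck * (0 - z kk)^2 := this
      _ = ck * (z kk)^2 := by ring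
  have hmain := onepoint hzk.1 hzk.2 (had (z kk) ⟨hzk.1, hzk.2⟩) hm1 hm0 ht1 ht0 hbk0 hck0
  have e1 : u 1 = f (Function.update x kk 1) - f z := rfl
  have e0 : u 0 = f (Function.update x kk 0) - f z := rfl
  have ep : u (z kk) = f (Function.update x kk (z kk)) - f z := rfl
  rw [e1, e0, ep] at hmain
  nlinarith [sq_nonneg bk]


lemma sum_split {n : ℕ} (kk : Fin n) (F : (Fin n → Bool) → ℝ) :
    ∑ w : Fin n → Bool, F w
      = ∑ w : Fin n → Bool,
          (if w kk then F w + F (Function.update w kk false) else 0) := by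
  have inv : Function.Involutive (fun w : Fin n → Bool => Function.update w kk (!w kk)) := by
    intro w; funext j
    by_cases h : j = kk <;> simp [h]
  have hsplit : ∀ w : Fin n → Bool,
      (if w kk then F w + F (Function.update w kk false) else 0)
        = (if w kk then F w else 0) + (if w kk then F (Function.update w kk false) else 0) := by
    intro w; split <;> simp
  rw [Finset.sum_congr rfl (fun w _ => hsplit w), Finset.sum_add_distrib]
  have h2 : ∑ w : Fin n → Bool, (if w kk then F (Function.update w kk false) else 0)
      = ∑ w : Fin n → Bool, (if w kk then 0 else F w) := by
    set σ : Equiv.Perm (Fin n → Bool) := Function.Involutive.toPerm _ inv with hσdef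
    have hσ : ∀ w, σ w = Function.update w kk (!w kk) := fun w => rfl
    rw [← Equiv.sum_comp σ
      (fun w => if w kk then F (Function.update w kk false) else 0)]
    apply Finset.sum_congr rfl
    intro w _
    have hk : σ w kk = !w kk := by rw [hσ]; simp
    have hup : Function.update (σ w) kk false = Function.update w kk false := by
      funext j; by_cases h : j = kk <;> simp [h, hσ]
    simp only [hk, hup]
    cases hwk : w kk with
    | false =>
      simp only [hwk, Bool.not_false, if_true, if_false]
      congr 1
      funext j
      by_cases h : j = kk
      · rw [h, Function.update_self, hwk]
      · rw [Function.update_of_ne h]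
    | true => simp [hwk]
  rw [h2, ← Finset.sum_add_distrib]
  apply Finset.sum_congr rfl
  intro w _
  cases hwk : w kk <;> simp [hwk]

noncomputable def ptD {n : ℕ} (z : Fin n → ℝ) (w : Fin n → Bool) (k : ℕ) : Fin n → ℝ :=
  fun i => if (i : ℕ) < k then (if w i then 1 else 0) else z i

noncomputable def muD {n : ℕ} (z : Fin n → ℝ) (w : Fin n → Bool) : ℝ :=
  ∏ i, (if w i then z i else 1 - z i)

noncomputable def PD {n : ℕ} (z : Fin n → ℝ) (kk : Fin n) (w : Fin n → Bool) : ℝ :=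
  ∏ j ∈ Finset.univ.erase kk, (if w j then z j else 1 - z j)

lemma ptD_mem {n : ℕ} {z : Fin n → ℝ} (hz : ∀ i, z i ∈ Set.Icc (0:ℝ) 1)
    (w : Fin n → Bool) (k : ℕ) : ptD z w k ∈ Icc (0 : Fin n → ℝ) 1 := by
  rw [Set.mem_Icc]
  constructor <;> intro i <;> simp only [ptD, Pi.zero_apply, Pi.one_apply] <;> split
  · split <;> norm_num
  · exact (hz i).1
  · split <;> norm_num
  · exact (hz i).2

lemma muD_eq {n : ℕ} (z : Fin n → ℝ) (kk : Fin n) (w : Fin n → Bool) :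
    muD z w = (if w kk then z kk else 1 - z kk) * PD z kk w :=
  (Finset.mul_prod_erase Finset.univ (fun j => if w j then z j else 1 - z j)
    (Finset.mem_univ kk)).symm

lemma PD_update {n : ℕ} (z : Fin n → ℝ) (kk : Fin n) (w : Fin n → Bool) (bb : Bool) :
    PD z kk (Function.update w kk bb) = PD z kk w :=
  Finset.prod_congr rfl fun j hj => by
    rw [Function.update_of_ne (Finset.ne_of_mem_erase hj)]

lemma PD_nonneg {n : ℕ} {z : Fin n → ℝ} (hz : ∀ i, z i ∈ Set.Icc (0:ℝ) 1)
    (kk : Fin n) (w : Fin n → Bool) : 0 ≤ PD z kk w :=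
  Finset.prod_nonneg fun j _ => by
    split
    · exact (hz j).1
    · linarith [(hz j).2]

lemma muD_sum {n : ℕ} (z : Fin n → ℝ) : ∑ w : Fin n → Bool, muD z w = 1 := by
  unfold muD
  have h1 : (∏ i : Fin n, ∑ bb : Bool, (if bb then z i else 1 - z i)) = 1 := by
    apply Finset.prod_eq_one
    intro i _
    simp
  rw [Finset.prod_univ_sum, Fintype.piFinset_univ] at h1
  exact h1

lemma PD_sum {n : ℕ} (z : Fin n → ℝ) (kk : Fin n) :
    ∑ w : Fin n → Bool, (if w kk then PD z kk w else 0) = 1 := by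
  rw [← muD_sum z, sum_split kk (muD z)]
  apply Finset.sum_congr rfl
  intro w _
  cases hwk : w kk with
  | false => simp [hwk]
  | true =>
    simp only [hwk, if_true]
    rw [muD_eq z kk w, muD_eq z kk (Function.update w kk false), PD_update]
    simp [hwk]
    ring

lemma ptD_succ {n : ℕ} (z : Fin n → ℝ) (w : Fin n → Bool) {k : ℕ} (hk : k < n) :
    ptD z w (k+1) = Function.update (ptD z w k) ⟨k, hk⟩ (if w ⟨k, hk⟩ then 1 else 0) := by
  funext i
  by_cases h : i = (⟨k, hk⟩ : Fin n)
  · subst h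
    simp [ptD]
  · rw [Function.update_of_ne h]
    have hne : (i : ℕ) ≠ k := fun hh => h (Fin.ext hh)
    by_cases hlt : (i:ℕ) < k
    · simp [ptD, hlt, Nat.lt_succ_of_lt hlt]
    · have h2 : ¬ (i:ℕ) < k + 1 := by omega
      simp [ptD, hlt, h2]

lemma ptD_indep {n : ℕ} (z : Fin n → ℝ) (w : Fin n → Bool) {k : ℕ} (hk : k < n) (bb : Bool) :
    ptD z (Function.update w ⟨k, hk⟩ bb) k = ptD z w k := by
  funext i
  by_cases hlt : (i:ℕ) < k
  · have hne : i ≠ (⟨k, hk⟩ : Fin n) := by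
      intro h; rw [h] at hlt; simp at hlt
    simp [ptD, hlt, Function.update_of_ne hne]
  · simp [ptD, hlt]

lemma step_lemma {n : ℕ} {f : (Fin n → ℝ) → ℝ} (hf : ContDiff ℝ 2 f)
    {z : Fin n → ℝ} (hz : ∀ i, z i ∈ Set.Icc (0:ℝ) 1)
    {a : ℝ} {b c : Fin n → ℝ}
    (ha : ∀ x ∈ Icc (0 : Fin n → ℝ) 1, |f x| ≤ a)
    (hb : ∀ i, ∀ x ∈ Icc (0 : Fin n → ℝ) 1, |fderiv ℝ f x (Pi.single i 1)| ≤ b i)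
    (hc : ∀ i, ∀ x ∈ Icc (0 : Fin n → ℝ) 1,
      |fderiv ℝ (fun w => fderiv ℝ f w (Pi.single i 1)) x (Pi.single i 1)| ≤ c i)
    {k : ℕ} (hk : k < n) :
    ∑ w : Fin n → Bool, muD z w * (f (ptD z w (k+1)) - f z)^2
      ≤ (∑ w : Fin n → Bool, muD z w * (f (ptD z w k) - f z)^2)
        + (a * c ⟨k, hk⟩ + b ⟨k, hk⟩ ^ 2) := by
  set kk : Fin n := ⟨k, hk⟩ with hkk
  have hzIcc : z ∈ Icc (0 : Fin n → ℝ) 1 :=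
    Set.mem_Icc.2 ⟨fun i => (hz i).1, fun i => (hz i).2⟩
  have hptkk : ∀ w : Fin n → Bool, ptD z w k kk = z kk := by
    intro w; simp [ptD, hkk]
  have key : ∀ w ∈ (Finset.univ : Finset (Fin n → Bool)),
      (if w kk then muD z w * (f (ptD z w (k+1)) - f z)^2
          + muD z (Function.update w kk false) * (f (ptD z (Function.update w kk false) (k+1)) - f z)^2 else 0)
      ≤ ((if w kk then muD z w * (f (ptD z w k) - f z)^2
          + muD z (Function.update w kk false) * (f (ptD z (Function.update w kk false) k) - f z)^2 else 0)
        + (if w kk then PD z kk w else 0) * (a * c kk + b kk ^ 2)) := by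
    intro w _
    cases hwk : w kk with
    | false => simp
    | true =>
      simp only [if_true]
      have e1 : ptD z w (k+1) = Function.update (ptD z w k) kk 1 := by
        rw [ptD_succ z w hk, ← hkk, hwk]; simp
      have e0 : ptD z (Function.update w kk false) (k+1)
          = Function.update (ptD z w k) kk 0 := by
        rw [ptD_succ z _ hk, ← hkk, ptD_indep z w hk false]
        simp
      have ek : ptD z (Function.update w kk false) k = ptD z w k := ptD_indep z w hk false
      have eX : Function.update (ptD z w k) kk (z kk) = ptD z w k := by
        rw [← hptkk w]; exact Function.update_eq_self _ _
      have hone := onecoord hf hzIcc kk ha (hb kk) (hc kk) (ptD_mem hz w k)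
      rw [eX] at hone
      have hPw := PD_nonneg hz kk w
      have hμw : muD z w = z kk * PD z kk w := by rw [muD_eq z kk w, hwk, if_pos rfl]
      have hμw' : muD z (Function.update w kk false) = (1 - z kk) * PD z kk w := by
        rw [muD_eq z kk _, PD_update]; simp
      rw [e1, e0, ek, hμw, hμw']
      have h2 := mul_le_mul_of_nonneg_left hone hPw
      nlinarith [h2]
  calc ∑ w : Fin n → Bool, muD z w * (f (ptD z w (k+1)) - f z)^2
      = ∑ w : Fin n → Bool, (if w kk then muD z w * (f (ptD z w (k+1)) - f z)^2
          + muD z (Function.update w kk false) * (f (ptD z (Function.update w kk false) (k+1)) - f z)^2 else 0) :=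
        sum_split kk _
    _ ≤ ∑ w : Fin n → Bool, ((if w kk then muD z w * (f (ptD z w k) - f z)^2
          + muD z (Function.update w kk false) * (f (ptD z (Function.update w kk false) k) - f z)^2 else 0)
        + (if w kk then PD z kk w else 0) * (a * c kk + b kk ^ 2)) := Finset.sum_le_sum key
    _ = (∑ w : Fin n → Bool, (if w kk then muD z w * (f (ptD z w k) - f z)^2
          + muD z (Function.update w kk false) * (f (ptD z (Function.update w kk false) k) - f z)^2 else 0))
        + (∑ w : Fin n → Bool, (if w kk then PD z kk w else 0)) * (a * c kk + b kk ^ 2) := by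
        rw [Finset.sum_add_distrib, Finset.sum_mul]
    _ = (∑ w : Fin n → Bool, muD z w * (f (ptD z w k) - f z)^2) + (a * c kk + b kk ^ 2) := by
        rw [← sum_split kk _, PD_sum z kk, one_mul]

theorem stmt_9 (n : ℕ) (f : (Fin n → ℝ) → ℝ) (hf : ContDiff ℝ 2 f)
    (z : Fin n → ℝ) (hz : ∀ i, z i ∈ Set.Icc (0:ℝ) 1)
    (a : ℝ) (b c : Fin n → ℝ)
    (ha : ∀ x ∈ Set.Icc (0 : Fin n → ℝ) 1, |f x| ≤ a)
    (hb : ∀ i, ∀ x ∈ Set.Icc (0 : Fin n → ℝ) 1, |fderiv ℝ f x (Pi.single i 1)| ≤ b i)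
    (hc : ∀ i, ∀ x ∈ Set.Icc (0 : Fin n → ℝ) 1,
      |fderiv ℝ (fun w => fderiv ℝ f w (Pi.single i 1)) x (Pi.single i 1)| ≤ c i) :
    ∑ x : Fin n → Bool,
        (∏ i, (if x i then z i else 1 - z i)) *
          (f (fun i => if x i then 1 else 0) - f z) ^ 2
      ≤ ∑ i, (a * c i + b i ^ 2) := by
  have main : ∀ k : ℕ, k ≤ n →
      ∑ w : Fin n → Bool, muD z w * (f (ptD z w k) - f z)^2
        ≤ ∑ i ∈ Finset.univ.filter (fun i : Fin n => (i:ℕ) < k), (a * c i + b i ^ 2) := by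
    intro k
    induction k with
    | zero =>
      intro _
      have h0 : ∀ w : Fin n → Bool, ptD z w 0 = z := by
        intro w; funext i; simp [ptD]
      simp [h0]
    | succ k ih =>
      intro hk1
      have hk : k < n := hk1
      have hstep := step_lemma hf hz ha hb hc hk
      have hfil : Finset.univ.filter (fun i : Fin n => (i:ℕ) < k+1)
          = insert (⟨k, hk⟩ : Fin n) (Finset.univ.filter (fun i : Fin n => (i:ℕ) < k)) := by
        ext i
        simp only [Finset.mem_filter, Finset.mem_insert, Finset.mem_univ, true_and, Fin.ext_iff]
        omega
      rw [hfil, Finset.sum_insert (by simp)]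
      have hih := ih (le_of_lt hk)
      linarith
  have hfin := main n le_rfl
  have hfiln : Finset.univ.filter (fun i : Fin n => (i:ℕ) < n) = Finset.univ :=
    Finset.filter_true_of_mem fun i _ => i.isLt
  rw [hfiln] at hfin
  have hpt : ∀ w : Fin n → Bool, ptD z w n = fun i => if w i then 1 else 0 := by
    intro w; funext i; simp [ptD, i.isLt]
  calc ∑ x : Fin n → Bool,
        (∏ i, (if x i then z i else 1 - z i)) * (f (fun i => if x i then 1 else 0) - f z)^2
      = ∑ w : Fin n → Bool, muD z w * (f (ptD z w n) - f z)^2 := by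
        apply Finset.sum_congr rfl
        intro w _
        rw [hpt w]
        rfl
    _ ≤ _ := hfin
end

section
/- For any τ ∈ (0,1) there exists a finite set W(τ) of N×N real matrices with |W(τ)| ≤ exp(34(N/τ²) log(51/τ²)) such that for every N×N matrix M with entries in [0,1] there exists W ∈ W(τ) with ‖M − W‖_op ≤ Nτ, where ‖·‖_op denotes the ℓ²-operator norm. -/
open MeasureTheory Metric
open scoped ENNReal NNReal InnerProductSpace


lemma net_lemma (N : ℕ) [NeZero N] {R δ : ℝ} (hδ : 0 < δ) (hδR : δ ≤ R) :
    ∃ s : Finset (EuclideanSpace ℝ (Fin N)),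
      (∀ y ∈ s, ‖y‖ ≤ R) ∧ (s.card : ℝ) ≤ (3*R/δ)^N ∧
      ∀ x : EuclideanSpace ℝ (Fin N), ‖x‖ ≤ R → ∃ y ∈ s, ‖x - y‖ ≤ δ := by
  classical
  set E := EuclideanSpace ℝ (Fin N)
  have hR : 0 < R := lt_of_lt_of_le hδ hδR
  set Good : Finset E → Prop := fun s =>
    (∀ y ∈ s, ‖y‖ ≤ R) ∧ (s : Set E).Pairwise (fun a b => δ ≤ dist a b) with hGood
  -- cardinality bound for good sets
  have cardbound : ∀ s : Finset E, Good s → (s.card : ℝ) ≤ (3*R/δ)^N := by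
    intro s hs
    set V := volume (ball (0:E) 1) with hV
    have hV0 : V ≠ 0 := (measure_ball_pos _ _ one_pos).ne'
    have hVtop : V ≠ ⊤ := measure_ball_lt_top.ne
    have hhalf : (0:ℝ) < δ/2 := by linarith
    have hball : ∀ x : E, volume (ball x (δ/2)) = ENNReal.ofReal ((δ/2)^N) * V := by
      intro x
      rw [Measure.addHaar_ball_of_pos _ x hhalf, finrank_euclideanSpace_fin]
    have hdisj : (↑s : Set E).PairwiseDisjoint (fun x => ball x (δ/2)) := by
      intro a ha b hb hab
      apply ball_disjoint_ball
      have := hs.2 ha hb hab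
      linarith
    have hsub : (⋃ x ∈ s, ball x (δ/2)) ⊆ ball (0:E) (R + δ/2) := by
      intro z hz
      simp only [Set.mem_iUnion] at hz
      obtain ⟨x, hx, hzx⟩ := hz
      have h1 : dist z x < δ/2 := mem_ball.mp hzx
      have h2 : ‖x‖ ≤ R := hs.1 x hx
      have : dist z (0:E) ≤ dist z x + dist x 0 := dist_triangle _ _ _
      rw [mem_ball]
      rw [dist_zero_right] at this ⊢
      linarith [dist_zero_right x ▸ h2]
    have key : (s.card : ℝ≥0∞) * (ENNReal.ofReal ((δ/2)^N) * V)
        ≤ ENNReal.ofReal ((R + δ/2)^N) * V := by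
      calc (s.card : ℝ≥0∞) * (ENNReal.ofReal ((δ/2)^N) * V)
          = ∑ x ∈ s, volume (ball x (δ/2)) := by
            simp [hball, Finset.sum_const, nsmul_eq_mul]
        _ = volume (⋃ x ∈ s, ball x (δ/2)) :=
            (measure_biUnion_finset hdisj (fun x _ => measurableSet_ball)).symm
        _ ≤ volume (ball (0:E) (R + δ/2)) := measure_mono hsub
        _ = ENNReal.ofReal ((R + δ/2)^N) * V := by
            rw [Measure.addHaar_ball_of_pos _ _ (by linarith), finrank_euclideanSpace_fin]
    rw [← mul_assoc] at key
    have key2 : (s.card : ℝ≥0∞) * ENNReal.ofReal ((δ/2)^N) ≤ ENNReal.ofReal ((R + δ/2)^N) :=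
      (ENNReal.mul_le_mul_iff_left hV0 hVtop).mp key
    have key3 : (s.card : ℝ) * (δ/2)^N ≤ (R + δ/2)^N := by
      rw [← ENNReal.ofReal_natCast s.card, ← ENNReal.ofReal_mul (by positivity)] at key2
      exact (ENNReal.ofReal_le_ofReal_iff (by positivity)).mp key2
    have hpow : (R + δ/2)^N ≤ (3*R/δ)^N * (δ/2)^N := by
      rw [← mul_pow]
      apply pow_le_pow_left₀ (by linarith)
      have h3 : 3*R/δ*(δ/2) = 3*R/2 := by field_simp
      rw [h3]; linarith
    have h2 : (0:ℝ) < (δ/2)^N := by positivity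
    nlinarith [key3, hpow]
  -- choose a good set of maximal cardinality
  set C : ℕ := Nat.floor ((3*R/δ)^N) with hC
  have hle : ∀ s : Finset E, Good s → s.card ≤ C := fun s hs =>
    Nat.le_floor (cardbound s hs)
  set P : ℕ → Prop := fun n => ∃ s : Finset E, Good s ∧ s.card = n with hPdef
  have hP0 : P 0 := ⟨∅, ⟨by simp, by simp⟩, rfl⟩
  have hPspec : P (Nat.findGreatest P C) := Nat.findGreatest_spec (Nat.zero_le C) hP0
  obtain ⟨s, hsGood, hscard⟩ := hPspec
  refine ⟨s, hsGood.1, cardbound s hsGood, ?_⟩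
  intro x hx
  by_contra hcon
  push_neg at hcon
  have hxdist : ∀ y ∈ s, δ < dist x y := by
    intro y hy
    rw [dist_eq_norm]
    exact hcon y hy
  have hxs : x ∉ s := by
    intro h
    have := hxdist x h
    simp at this
    linarith
  have hGood' : Good (insert x s) := by
    constructor
    · intro y hy
      rcases Finset.mem_insert.mp hy with rfl | hy
      · exact hx
      · exact hsGood.1 y hy
    · rw [Finset.coe_insert]
      rw [Set.pairwise_insert]
      exact ⟨hsGood.2, fun b hb _ => ⟨(hxdist b hb).le, by rw [dist_comm]; exact (hxdist b hb).le⟩⟩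
  have hcard' : (insert x s).card = s.card + 1 := Finset.card_insert_of_notMem hxs
  have : s.card + 1 ≤ Nat.findGreatest P C := by
    apply Nat.le_findGreatest
    · rw [← hcard']; exact hle _ hGood'
    · exact ⟨insert x s, hGood', hcard'⟩
  omega


noncomputable def r1 {N : ℕ} (x u : EuclideanSpace ℝ (Fin N)) :
    EuclideanSpace ℝ (Fin N) →L[ℝ] EuclideanSpace ℝ (Fin N) :=
  (innerSL ℝ x).smulRight u

lemma r1_apply {N : ℕ} (x u y : EuclideanSpace ℝ (Fin N)) :
    r1 x u y = ⟪x, y⟫_ℝ • u := rfl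

lemma r1_norm {N : ℕ} (x u : EuclideanSpace ℝ (Fin N)) : ‖r1 x u‖ = ‖x‖ * ‖u‖ := by
  rw [r1, ContinuousLinearMap.norm_smulRight_apply, innerSL_apply_norm]

lemma parseval {N : ℕ} {ι : Type*} [Fintype ι]
    (b : OrthonormalBasis ι ℝ (EuclideanSpace ℝ (Fin N))) (w : EuclideanSpace ℝ (Fin N)) :
    ∑ i, ⟪b i, w⟫_ℝ^2 = ‖w‖^2 := by
  have h := b.sum_inner_mul_inner w w
  rw [← real_inner_self_eq_norm_sq, ← h]
  congr 1; ext i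
  rw [sq, real_inner_comm]

lemma frob_pair {N : ℕ} {ι κ : Type*} [Fintype ι] [Fintype κ]
    (b : OrthonormalBasis ι ℝ (EuclideanSpace ℝ (Fin N)))
    (c : OrthonormalBasis κ ℝ (EuclideanSpace ℝ (Fin N)))
    (T : EuclideanSpace ℝ (Fin N) →L[ℝ] EuclideanSpace ℝ (Fin N)) :
    ∑ i, ‖T (b i)‖^2 = ∑ j, ‖(ContinuousLinearMap.adjoint T) (c j)‖^2 := by
  calc ∑ i, ‖T (b i)‖^2 = ∑ i, ∑ j, ⟪c j, T (b i)⟫_ℝ^2 := by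
        simp_rw [parseval c]
    _ = ∑ j, ∑ i, ⟪b i, (ContinuousLinearMap.adjoint T) (c j)⟫_ℝ^2 := by
        rw [Finset.sum_comm]
        congr 1; ext j; congr 1; ext i
        rw [← ContinuousLinearMap.adjoint_inner_left, real_inner_comm]
    _ = ∑ j, ‖(ContinuousLinearMap.adjoint T) (c j)‖^2 := by
        simp_rw [parseval b]

noncomputable def frobSq {N : ℕ} (T : EuclideanSpace ℝ (Fin N) →L[ℝ] EuclideanSpace ℝ (Fin N)) : ℝ :=
  ∑ j, ‖T (EuclideanSpace.basisFun (Fin N) ℝ j)‖^2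

lemma frobSq_nonneg {N : ℕ} (T : EuclideanSpace ℝ (Fin N) →L[ℝ] EuclideanSpace ℝ (Fin N)) :
    0 ≤ frobSq T := Finset.sum_nonneg fun _ _ => sq_nonneg _

lemma frobSq_eq {N : ℕ} {ι : Type*} [Fintype ι]
    (b : OrthonormalBasis ι ℝ (EuclideanSpace ℝ (Fin N)))
    (T : EuclideanSpace ℝ (Fin N) →L[ℝ] EuclideanSpace ℝ (Fin N)) :
    ∑ i, ‖T (b i)‖^2 = frobSq T :=
  (frob_pair b (EuclideanSpace.basisFun (Fin N) ℝ) T).trans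
    (frob_pair (EuclideanSpace.basisFun (Fin N) ℝ) (EuclideanSpace.basisFun (Fin N) ℝ) T).symm

lemma opNorm_sq_le_frobSq {N : ℕ} (T : EuclideanSpace ℝ (Fin N) →L[ℝ] EuclideanSpace ℝ (Fin N)) :
    ‖T‖^2 ≤ frobSq T := by
  have hb : ∀ x : EuclideanSpace ℝ (Fin N), ‖T x‖ ≤ Real.sqrt (frobSq T) * ‖x‖ := by
    intro x
    set b := EuclideanSpace.basisFun (Fin N) ℝ
    have hx : x = ∑ i, b.repr x i • b i := (b.sum_repr x).symm
    have h1 : ‖T x‖ ≤ ∑ i, |b.repr x i| * ‖T (b i)‖ := by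
      conv_lhs => rw [hx]
      rw [map_sum]
      refine (norm_sum_le _ _).trans ?_
      apply Finset.sum_le_sum
      intro i _
      rw [_root_.map_smul, norm_smul, Real.norm_eq_abs]
    have h2 : (∑ i, |b.repr x i| * ‖T (b i)‖)^2 ≤ (∑ i, |b.repr x i|^2) * ∑ i, ‖T (b i)‖^2 :=
      Finset.sum_mul_sq_le_sq_mul_sq _ _ _
    have h3 : ∑ i, |b.repr x i|^2 = ‖x‖^2 := by
      have hn : ‖b.repr x‖ = ‖x‖ := b.repr.norm_map x
      rw [← hn, EuclideanSpace.norm_eq, Real.sq_sqrt (by positivity)]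
      simp [Real.norm_eq_abs]
    have h4 : ∑ i, ‖T (b i)‖^2 = frobSq T := frobSq_eq b T
    rw [h3, h4] at h2
    have h5 : ‖T x‖^2 ≤ frobSq T * ‖x‖^2 := by
      nlinarith [norm_nonneg (T x), Finset.sum_nonneg (fun i (_ : i ∈ Finset.univ) => mul_nonneg (abs_nonneg (b.repr x i)) (norm_nonneg (T (b i))))]
    calc ‖T x‖ = Real.sqrt (‖T x‖^2) := (Real.sqrt_sq (norm_nonneg _)).symm
      _ ≤ Real.sqrt (frobSq T * ‖x‖^2) := Real.sqrt_le_sqrt h5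
      _ = Real.sqrt (frobSq T) * ‖x‖ := by
          rw [Real.sqrt_mul (frobSq_nonneg T), Real.sqrt_sq (norm_nonneg _)]
  have := T.opNorm_le_bound (Real.sqrt_nonneg _) hb
  calc ‖T‖^2 ≤ (Real.sqrt (frobSq T))^2 := by
        apply pow_le_pow_left₀ (norm_nonneg _) this
    _ = frobSq T := Real.sq_sqrt (frobSq_nonneg T)

lemma exists_max {N : ℕ} (T : EuclideanSpace ℝ (Fin N) →L[ℝ] EuclideanSpace ℝ (Fin N))
    (hT : T ≠ 0) : ∃ x : EuclideanSpace ℝ (Fin N), ‖x‖ = 1 ∧ ‖T x‖ = ‖T‖ := by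
  obtain ⟨y, hy⟩ : ∃ y, T y ≠ 0 := by
    by_contra h
    push_neg at h
    exact hT (ContinuousLinearMap.ext fun z => by simp [h z])
  have hy0 : y ≠ 0 := fun h => hy (by simp [h])
  have : Nontrivial (EuclideanSpace ℝ (Fin N)) := ⟨⟨y, 0, hy0⟩⟩
  have hne : (sphere (0 : EuclideanSpace ℝ (Fin N)) 1).Nonempty :=
    NormedSpace.sphere_nonempty.mpr zero_le_one
  obtain ⟨x, hx, hmax⟩ := (isCompact_sphere (0 : EuclideanSpace ℝ (Fin N)) 1).exists_isMaxOn hne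
    ((continuous_norm.comp T.continuous).continuousOn)
  have hx1 : ‖x‖ = 1 := by simpa using mem_sphere_zero_iff_norm.mp hx
  refine ⟨x, hx1, le_antisymm (by simpa [hx1] using T.le_opNorm x) ?_⟩
  apply T.opNorm_le_bound (norm_nonneg _)
  intro z
  rcases eq_or_ne z 0 with rfl | hz
  · simp
  · have hmem : (‖z‖⁻¹ • z) ∈ sphere (0 : EuclideanSpace ℝ (Fin N)) 1 := by
      simp [norm_smul, inv_mul_cancel₀ (norm_ne_zero_iff.mpr hz)]
    have h := hmax hmem
    simp only [IsMaxOn, IsMaxFilter] at hmax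
    have h' : ‖T (‖z‖⁻¹ • z)‖ ≤ ‖T x‖ := h
    rw [_root_.map_smul, norm_smul, norm_inv, Real.norm_eq_abs, abs_of_nonneg (norm_nonneg z)] at h'
    have hz' : (0:ℝ) < ‖z‖ := norm_pos_iff.mpr hz
    calc ‖T z‖ = ‖z‖ * (‖z‖⁻¹ * ‖T z‖) := by field_simp
      _ ≤ ‖z‖ * ‖T x‖ := by
          exact mul_le_mul_of_nonneg_left h' (norm_nonneg z)
      _ = ‖T x‖ * ‖z‖ := mul_comm _ _

lemma r1_zero {N : ℕ} (u : EuclideanSpace ℝ (Fin N)) : r1 0 u = 0 := by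
  ext1 y
  simp [r1_apply]

set_option maxHeartbeats 1000000 in
set_option synthInstance.maxHeartbeats 200000 in
lemma greedy {N : ℕ} (k : ℕ) (T : EuclideanSpace ℝ (Fin N) →L[ℝ] EuclideanSpace ℝ (Fin N)) :
    ∃ u v : Fin k → EuclideanSpace ℝ (Fin N),
      (∀ i, ‖u i‖ ≤ ‖T‖) ∧ (∀ i, ‖v i‖ ≤ 1) ∧
      ‖T - ∑ i, r1 (v i) (u i)‖ ≤ ‖T‖ ∧
      ‖T - ∑ i, r1 (v i) (u i)‖^2 * k ≤ frobSq T := by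
  classical
  induction k generalizing T with
  | zero =>
    refine ⟨0, 0, fun i => i.elim0, fun i => i.elim0, ?_, ?_⟩
    · simp
    · simpa using frobSq_nonneg T
  | succ k ih =>
    by_cases hT : T = 0
    · subst hT
      have hsum0 : (∑ i : Fin (k+1), r1 ((0 : Fin (k+1) → EuclideanSpace ℝ (Fin N)) i)
          ((0 : Fin (k+1) → EuclideanSpace ℝ (Fin N)) i)) = 0 := by
        simp [Pi.zero_apply, r1_zero]
      refine ⟨0, 0, ?_, ?_, ?_, ?_⟩
      · intro i; rw [Pi.zero_apply]; simp
      · intro i; rw [Pi.zero_apply]; simp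
      · rw [hsum0]; simp
      · rw [hsum0]
        simpa using frobSq_nonneg (0 : EuclideanSpace ℝ (Fin N) →L[ℝ] EuclideanSpace ℝ (Fin N))
    obtain ⟨x, hx1, hxmax⟩ := exists_max T hT
    set T' := T - r1 x (T x) with hT'def
    have happ : ∀ y, T' y = T (y - ⟪x, y⟫_ℝ • x) := by
      intro y
      simp [hT'def, r1_apply, map_sub, _root_.map_smul]
    have ha : ‖T'‖ ≤ ‖T‖ := by
      apply ContinuousLinearMap.opNorm_le_bound _ (norm_nonneg T)
      intro y
      rw [happ y]
      have hz : ‖y - ⟪x, y⟫_ℝ • x‖ ≤ ‖y‖ := by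
        have hsq : ‖y - ⟪x, y⟫_ℝ • x‖^2 = ‖y‖^2 - ⟪x, y⟫_ℝ^2 := by
          rw [norm_sub_sq_real]
          rw [real_inner_smul_right, norm_smul, Real.norm_eq_abs, real_inner_comm y x]
          rw [mul_pow, sq_abs, hx1]
          ring
        nlinarith [norm_nonneg (y - ⟪x, y⟫_ℝ • x), norm_nonneg y]
      calc ‖T (y - ⟪x, y⟫_ℝ • x)‖ ≤ ‖T‖ * ‖y - ⟪x, y⟫_ℝ • x‖ := T.le_opNorm _
        _ ≤ ‖T‖ * ‖y‖ := mul_le_mul_of_nonneg_left hz (norm_nonneg T)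
    have hb : frobSq T' = frobSq T - ‖T x‖^2 := by
      have hon : Orthonormal ℝ (Subtype.val : ({x} : Set (EuclideanSpace ℝ (Fin N))) → _) := by
        rw [orthonormal_subtype_iff_ite]
        intro v hv w hw
        rcases hv with rfl
        rcases hw with rfl
        rw [if_pos rfl, real_inner_self_eq_norm_sq, hx1, one_pow]
      obtain ⟨s, b, hsub, hbcoe⟩ := hon.exists_orthonormalBasis_extension
      have hxs : x ∈ s := hsub rfl
      set i₀ : {y // y ∈ s} := ⟨x, hxs⟩
      have hbi₀ : b i₀ = x := by rw [hbcoe]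
      have hT'x : T' (b i₀) = 0 := by
        rw [hbi₀, happ, real_inner_self_eq_norm_sq, hx1]
        simp
      have hother : ∀ i : {y // y ∈ s}, i ≠ i₀ → T' (b i) = T (b i) := by
        intro i hi
        rw [happ]
        have h0 : ⟪x, b i⟫_ℝ = 0 := by
          rw [← hbi₀]
          exact b.orthonormal.2 (Ne.symm hi)
        rw [h0]
        simp
      have h1 : frobSq T' = ∑ i, ‖T' (b i)‖^2 := (frobSq_eq b T').symm
      have h2 : frobSq T = ∑ i, ‖T (b i)‖^2 := (frobSq_eq b T).symm
      rw [h1, h2, ← Finset.sum_erase_add _ _ (Finset.mem_univ i₀),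
        ← Finset.sum_erase_add _ (fun i => ‖T (b i)‖^2) (Finset.mem_univ i₀)]
      rw [hT'x, hbi₀]
      have heq : ∑ i ∈ Finset.univ.erase i₀, ‖T' (b i)‖^2
          = ∑ i ∈ Finset.univ.erase i₀, ‖T (b i)‖^2 := by
        apply Finset.sum_congr rfl
        intro i hi
        rw [hother i (Finset.ne_of_mem_erase hi)]
      rw [heq]
      simp
    obtain ⟨u', v', hu', hv', hres1, hres2⟩ := ih T'
    set u₀ : Fin (k+1) → EuclideanSpace ℝ (Fin N) := Fin.cons (T x) u' with hu₀
    set v₀ : Fin (k+1) → EuclideanSpace ℝ (Fin N) := Fin.cons x v' with hv₀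
    have hsum : (∑ i : Fin (k+1), r1 (v₀ i) (u₀ i))
        = r1 x (T x) + ∑ i : Fin k, r1 (v' i) (u' i) := by
      rw [Fin.sum_univ_succ]
      simp only [hu₀, hv₀, Fin.cons_zero, Fin.cons_succ]
    have hTsub : T - (∑ i : Fin (k+1), r1 (v₀ i) (u₀ i))
        = T' - ∑ i : Fin k, r1 (v' i) (u' i) := by
      rw [hsum, hT'def]
      abel
    refine ⟨u₀, v₀, ?_, ?_, ?_, ?_⟩
    · intro i
      refine Fin.cases ?_ ?_ i
      · simpa [hu₀] using hxmax.le
      · intro j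
        simpa [hu₀] using (hu' j).trans ha
    · intro i
      refine Fin.cases ?_ ?_ i
      · simpa [hv₀] using hx1.le
      · intro j
        simpa [hv₀] using hv' j
    · rw [hTsub]
      exact hres1.trans ha
    · rw [hTsub]
      have hT'norm2 : ‖T'‖^2 ≤ ‖T x‖^2 := by
        rw [hxmax]
        exact pow_le_pow_left₀ (norm_nonneg _) ha 2
      have hresle : ‖T' - ∑ i : Fin k, r1 (v' i) (u' i)‖^2 ≤ ‖T'‖^2 :=
        pow_le_pow_left₀ (norm_nonneg _) hres1 2
      push_cast
      nlinarith [hres2, hb, frobSq_nonneg T']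

set_option maxHeartbeats 1000000 in
theorem stmt_11 (N : ℕ) (τ : ℝ) (hτ : τ ∈ Set.Ioo (0:ℝ) 1) :
    ∃ W : Finset (Matrix (Fin N) (Fin N) ℝ),
      (W.card : ℝ) ≤ Real.exp (34 * (N / τ ^ 2) * Real.log (51 / τ ^ 2)) ∧
      ∀ M : Matrix (Fin N) (Fin N) ℝ, (∀ i j, M i j ∈ Set.Icc (0:ℝ) 1) →
        ∃ A ∈ W, ‖Matrix.toEuclideanCLM (𝕜 := ℝ) (M - A)‖ ≤ N * τ := by
  classical
  obtain ⟨hτ0, hτ1⟩ := hτ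
  rcases Nat.eq_zero_or_pos N with rfl | hNpos
  · -- trivial case N = 0
    refine ⟨{0}, ?_, ?_⟩
    · simp only [Finset.card_singleton, Nat.cast_one]
      rw [show (34:ℝ) * ((0:ℕ) / τ ^ 2) * Real.log (51 / τ ^ 2) = 0 by push_cast; ring]
      simp
    · intro M _
      refine ⟨0, Finset.mem_singleton_self 0, ?_⟩
      have hnorm0 : ∀ w : EuclideanSpace ℝ (Fin 0), ‖w‖ = 0 := by
        intro w
        rw [EuclideanSpace.norm_eq]
        simp
      have h0 : ‖Matrix.toEuclideanCLM (𝕜 := ℝ) (n := Fin 0) (M - 0)‖ ≤ 0 := by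
        apply ContinuousLinearMap.opNorm_le_bound _ le_rfl
        intro y
        simp only [hnorm0]
        norm_num
      exact h0.trans (by positivity)
  · -- main case
    haveI : NeZero N := ⟨hNpos.ne'⟩
    have hN0 : (0:ℝ) < N := by exact_mod_cast hNpos
    have hτsq : 0 < τ^2 := by positivity
    have hτsq1 : τ^2 ≤ 1 := by nlinarith
    set k : ℕ := ⌈(4:ℝ)/τ^2⌉₊ with hk
    have hk1 : (4:ℝ)/τ^2 ≤ k := Nat.le_ceil _
    have hkpos : 0 < k := by
      rw [hk]
      apply Nat.ceil_pos.mpr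
      positivity
    have hk0 : (0:ℝ) < k := by exact_mod_cast hkpos
    have hk2 : (k:ℝ) ≤ 5/τ^2 := by
      have h1 : (k:ℝ) < 4/τ^2 + 1 := Nat.ceil_lt_add_one (by positivity)
      have h2 : (1:ℝ) ≤ 1/τ^2 := by
        rw [le_div_iff₀ hτsq]; linarith
      have h3 : 4/τ^2 + 1/τ^2 = 5/τ^2 := by ring
      linarith
    set δu : ℝ := N*τ/(4*k) with hδu
    set δv : ℝ := τ/(4*k) with hδv
    have hδu0 : 0 < δu := by positivity
    have hδv0 : 0 < δv := by positivity
    have hone : (1:ℝ) ≤ (k:ℝ) := by exact_mod_cast hkpos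
    have hδuN : δu ≤ N := by
      rw [hδu, div_le_iff₀ (by positivity)]
      nlinarith
    have hδv1 : δv ≤ 1 := by
      rw [hδv, div_le_iff₀ (by positivity)]
      nlinarith
    obtain ⟨su, hsu_ball, hsu_card, hsu_net⟩ := net_lemma N (R := (N:ℝ)) (δ := δu) hδu0 hδuN
    obtain ⟨sv, hsv_ball, hsv_card, hsv_net⟩ := net_lemma N (R := (1:ℝ)) (δ := δv) hδv0 hδv1
    set x12 : ℝ := 12*k/τ with hx12
    have hbase_u : 3*(N:ℝ)/δu = x12 := by
      rw [hδu, hx12]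
      field_simp
      ring
    have hbase_v : 3*(1:ℝ)/δv = x12 := by
      rw [hδv, hx12]
      field_simp
      ring
    set F : ((Fin k → EuclideanSpace ℝ (Fin N)) × (Fin k → EuclideanSpace ℝ (Fin N)))
        → Matrix (Fin N) (Fin N) ℝ := fun p =>
      (Matrix.toEuclideanCLM (𝕜 := ℝ) (n := Fin N)).symm (∑ i, r1 (p.2 i) (p.1 i)) with hF
    set S := (Fintype.piFinset fun _ : Fin k => su) ×ˢ (Fintype.piFinset fun _ : Fin k => sv)
      with hS
    refine ⟨S.image F, ?_, ?_⟩
    · -- cardinality bound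
      have hx12ge1 : (1:ℝ) ≤ x12 := by
        rw [hx12, le_div_iff₀ hτ0]
        have : (1:ℝ) ≤ (k:ℝ) := by exact_mod_cast hkpos
        nlinarith
      have hx12pos : (0:ℝ) < x12 := lt_of_lt_of_le one_pos hx12ge1
      have hcard1 : ((S.image F).card : ℝ) ≤ (su.card : ℝ)^k * (sv.card : ℝ)^k := by
        have h1 : (S.image F).card ≤ S.card := Finset.card_image_le
        have h2 : S.card = su.card^k * sv.card^k := by
          rw [hS, Finset.card_product, Fintype.card_piFinset, Fintype.card_piFinset]
          simp
        rw [h2] at h1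
        exact_mod_cast h1
      have hcard2 : (su.card : ℝ)^k * (sv.card : ℝ)^k ≤ (x12^N)^k * (x12^N)^k := by
        apply mul_le_mul
        · exact pow_le_pow_left₀ (by positivity) (by rw [← hbase_u]; exact hsu_card) k
        · exact pow_le_pow_left₀ (by positivity) (by rw [← hbase_v]; exact hsv_card) k
        · positivity
        · positivity
      have hcard3 : (x12^N)^k * (x12^N)^k = x12^(N*k + N*k) := by
        rw [← pow_mul, ← pow_add]
      have hlog51 : (0:ℝ) ≤ Real.log (51/τ^2) := by
        apply Real.log_nonneg
        rw [le_div_iff₀ hτsq]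
        linarith
      have hlogx : Real.log x12 ≤ 2 * Real.log (51/τ^2) := by
        rw [show (2:ℝ) * Real.log (51/τ^2) = Real.log ((51/τ^2)^2) by
          rw [Real.log_pow]; push_cast; ring]
        apply Real.log_le_log hx12pos
        rw [hx12, div_pow, div_le_div_iff₀ (by positivity) (by positivity)]
        have hkτ : (k:ℝ)*τ^2 ≤ 5 := (le_div_iff₀ hτsq).mp hk2
        have hττ : τ^2 ≤ τ := by nlinarith
        nlinarith [mul_le_mul_of_nonneg_right hkτ hτsq.le]
      have hlogx0 : 0 ≤ Real.log x12 := Real.log_nonneg hx12ge1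
      have hexp : x12^(N*k + N*k) = Real.exp ((N*k + N*k : ℕ) * Real.log x12) := by
        conv_rhs => rw [Real.exp_nat_mul, Real.exp_log hx12pos]
      have hfinal : ((N*k + N*k : ℕ) : ℝ) * Real.log x12
          ≤ 34 * (N / τ ^ 2) * Real.log (51 / τ ^ 2) := by
        have hm : ((N*k + N*k : ℕ) : ℝ) = 2*(N:ℝ)*(k:ℝ) := by push_cast; ring
        rw [hm]
        calc 2*(N:ℝ)*(k:ℝ) * Real.log x12 ≤ 2*(N:ℝ)*(k:ℝ) * (2 * Real.log (51/τ^2)) := by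
              apply mul_le_mul_of_nonneg_left hlogx (by positivity)
          _ = 4*(N:ℝ)*(k:ℝ) * Real.log (51/τ^2) := by ring
          _ ≤ 34 * (N / τ ^ 2) * Real.log (51 / τ ^ 2) := by
              apply mul_le_mul_of_nonneg_right _ hlog51
              have : 4*(N:ℝ)*(k:ℝ) ≤ 4*(N:ℝ)*(5/τ^2) :=
                mul_le_mul_of_nonneg_left hk2 (by positivity)
              calc 4*(N:ℝ)*(k:ℝ) ≤ 4*(N:ℝ)*(5/τ^2) := this
                _ = 20 * ((N:ℝ)/τ^2) := by ring
                _ ≤ 34 * ((N:ℝ)/τ^2) := by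
                    apply mul_le_mul_of_nonneg_right (by norm_num) (by positivity)
      calc ((S.image F).card : ℝ) ≤ (x12^N)^k * (x12^N)^k := hcard1.trans hcard2
        _ = x12^(N*k+N*k) := hcard3
        _ = Real.exp ((N*k + N*k : ℕ) * Real.log x12) := hexp
        _ ≤ Real.exp (34 * (N / τ ^ 2) * Real.log (51 / τ ^ 2)) := Real.exp_le_exp.mpr hfinal
    · -- approximation
      intro M hM
      set T := Matrix.toEuclideanCLM (𝕜 := ℝ) (n := Fin N) M with hT
      have hcoord : ∀ j i, (T (EuclideanSpace.basisFun (Fin N) ℝ j)) i = M i j := by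
        intro j i
        rw [hT]
        have hsingle : (Matrix.toEuclideanCLM (𝕜 := ℝ) (n := Fin N) M)
            (EuclideanSpace.single j 1)
            = (WithLp.equiv 2 _).symm (Matrix.toLin' M (Pi.single j 1)) :=
          Matrix.toEuclideanCLM_toLp M (Pi.single j 1)
        rw [EuclideanSpace.basisFun_apply, hsingle, WithLp.equiv_symm_apply, PiLp.toLp_apply,
          Matrix.toLin'_apply, Matrix.mulVec_single]
        simp
      have hfrob : frobSq T ≤ (N:ℝ)^2 := by
        rw [frobSq]
        have hcol : ∀ j, ‖T (EuclideanSpace.basisFun (Fin N) ℝ j)‖^2 ≤ (N:ℝ) := by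
          intro j
          rw [EuclideanSpace.norm_eq, Real.sq_sqrt (by positivity)]
          calc ∑ i, ‖(T (EuclideanSpace.basisFun (Fin N) ℝ j)) i‖^2
              ≤ ∑ _i : Fin N, (1:ℝ) := by
                apply Finset.sum_le_sum
                intro i _
                rw [hcoord j i, Real.norm_eq_abs, sq_abs]
                obtain ⟨h0, h1⟩ := hM i j
                nlinarith
            _ = (N:ℝ) := by simp
        calc ∑ j, ‖T (EuclideanSpace.basisFun (Fin N) ℝ j)‖^2 ≤ ∑ _j : Fin N, (N:ℝ) :=
              Finset.sum_le_sum fun j _ => hcol j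
          _ = (N:ℝ)^2 := by simp [sq]
      have hTnorm : ‖T‖ ≤ N := by
        have h := opNorm_sq_le_frobSq T
        nlinarith [norm_nonneg T]
      obtain ⟨u, v, hu, hv, _, hres2⟩ := greedy k T
      set E0 := ‖T - ∑ i, r1 (v i) (u i)‖ with hE0def
      have hE0nn : 0 ≤ E0 := norm_nonneg _
      have hE0 : E0 ≤ N*τ/2 := by
        have h1 : E0^2 * k ≤ (N:ℝ)^2 := hres2.trans hfrob
        have h2 : E0^2 * (4/τ^2) ≤ E0^2 * k :=
          mul_le_mul_of_nonneg_left hk1 (sq_nonneg _)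
        have h4 : E0^2 * (4/τ^2) ≤ (N:ℝ)^2 := le_trans h2 h1
        have h3 : E0^2 * 4 ≤ (N:ℝ)^2 * τ^2 := by
          calc E0^2*4 = (E0^2 * (4/τ^2)) * τ^2 := by field_simp
            _ ≤ (N:ℝ)^2 * τ^2 := mul_le_mul_of_nonneg_right h4 hτsq.le
        nlinarith [h3, hE0nn, mul_pos hN0 hτ0]
      choose u' hu'mem hu'close using fun i => hsu_net (u i) ((hu i).trans hTnorm)
      choose v' hv'mem hv'close using fun i => hsv_net (v i) (hv i)
      refine ⟨F (u', v'), Finset.mem_image_of_mem F ?_, ?_⟩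
      · rw [hS, Finset.mem_product]
        exact ⟨Fintype.mem_piFinset.mpr hu'mem, Fintype.mem_piFinset.mpr hv'mem⟩
      · have hFA : Matrix.toEuclideanCLM (𝕜 := ℝ) (n := Fin N) (F (u', v'))
            = ∑ i, r1 (v' i) (u' i) := by
          rw [hF]
          exact StarAlgEquiv.apply_symm_apply _ _
        have hmapsub : Matrix.toEuclideanCLM (𝕜 := ℝ) (n := Fin N) (M - F (u', v'))
            = T - ∑ i, r1 (v' i) (u' i) := by
          rw [map_sub, hFA, hT]
        rw [hmapsub]
        have hterm : ∀ i, ‖r1 (v i) (u i) - r1 (v' i) (u' i)‖ ≤ N*τ/(2*k) := by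
          intro i
          have hsplit : r1 (v i) (u i) - r1 (v' i) (u' i)
              = r1 (v i - v' i) (u i) + r1 (v' i) (u i - u' i) := by
            ext1 y
            simp only [ContinuousLinearMap.sub_apply, ContinuousLinearMap.add_apply, r1_apply,
              inner_sub_left, sub_smul, smul_sub]
            abel
          rw [hsplit]
          have h1 : ‖r1 (v i - v' i) (u i)‖ ≤ δv * N := by
            rw [r1_norm]
            exact mul_le_mul (hv'close i) ((hu i).trans hTnorm) (norm_nonneg _) hδv0.le
          have h2 : ‖r1 (v' i) (u i - u' i)‖ ≤ 1 * δu := by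
            rw [r1_norm]
            exact mul_le_mul (hsv_ball _ (hv'mem i)) (hu'close i) (norm_nonneg _) zero_le_one
          calc ‖r1 (v i - v' i) (u i) + r1 (v' i) (u i - u' i)‖
              ≤ ‖r1 (v i - v' i) (u i)‖ + ‖r1 (v' i) (u i - u' i)‖ := norm_add_le _ _
            _ ≤ δv * N + 1 * δu := add_le_add h1 h2
            _ = N*τ/(2*k) := by
                rw [hδv, hδu]
                field_simp
                ring
        have hsumdiff : ‖(∑ i, r1 (v i) (u i)) - ∑ i, r1 (v' i) (u' i)‖ ≤ N*τ/2 := by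
          rw [← Finset.sum_sub_distrib]
          refine (norm_sum_le _ _).trans ?_
          calc ∑ i, ‖r1 (v i) (u i) - r1 (v' i) (u' i)‖ ≤ ∑ _i : Fin k, N*τ/(2*k) :=
                Finset.sum_le_sum fun i _ => hterm i
            _ = k * (N*τ/(2*k)) := by
                rw [Finset.sum_const, Finset.card_univ, Fintype.card_fin, nsmul_eq_mul]
            _ = N*τ/2 := by
                field_simp
        calc ‖T - ∑ i, r1 (v' i) (u' i)‖
            ≤ ‖T - ∑ i, r1 (v i) (u i)‖
              + ‖(∑ i, r1 (v i) (u i)) - ∑ i, r1 (v' i) (u' i)‖ := by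
              have heq : T - ∑ i, r1 (v' i) (u' i)
                  = (T - ∑ i, r1 (v i) (u i))
                    + ((∑ i, r1 (v i) (u i)) - ∑ i, r1 (v' i) (u' i)) := by abel
              rw [heq]
              exact norm_add_le _ _
          _ ≤ N*τ/2 + N*τ/2 := add_le_add hE0 hsumdiff
          _ = N*τ := by ring
end

section
/- With T as the homomorphism counting function of a graph H with m = |E| edges, if |{i,j,i',j'}| = 4 then ‖∂²T/∂x_{ij}∂x_{i'j'}‖_∞ ≤ 4m(m-1)N^{-2}, and if |{i,j,i',j'}| ∈ {2,3} then ‖∂²T/∂x_{ij}∂x_{i'j'}‖_∞ ≤ 4m(m-1)N^{-1}. -/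
set_option maxHeartbeats 1600000

open Finset

section Aux

variable {N k : ℕ}

def Lm (q : Fin k → Fin N) (e : Fin k × Fin k) :
    ((Fin N × Fin N) → ℝ) →L[ℝ] ℝ :=
  if q e.1 = q e.2 then 0
  else if q e.1 < q e.2 then ContinuousLinearMap.proj (q e.1, q e.2)
  else ContinuousLinearMap.proj (q e.2, q e.1)

lemma Lm_apply (q : Fin k → Fin N) (e : Fin k × Fin k)
    (y : (Fin N × Fin N) → ℝ) :
    Lm q e y = (if q e.1 = q e.2 then 0
      else if q e.1 < q e.2 then y (q e.1, q e.2) else y (q e.2, q e.1)) := by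
  unfold Lm; split_ifs <;> simp

lemma Lm_mem (q : Fin k → Fin N) (e : Fin k × Fin k)
    {y : (Fin N × Fin N) → ℝ} (hy : ∀ c, y c ∈ Set.Icc (0:ℝ) 1) :
    Lm q e y ∈ Set.Icc (0:ℝ) 1 := by
  rw [Lm_apply]; split_ifs
  · exact ⟨le_refl 0, zero_le_one⟩
  · exact hy _
  · exact hy _

lemma Lm_single (q : Fin k → Fin N) (e : Fin k × Fin k)
    {a b : Fin N} (hab : a < b) :
    Lm q e (Pi.single (a, b) 1) =
      if (q e.1 = a ∧ q e.2 = b) ∨ (q e.1 = b ∧ q e.2 = a) then 1 else 0 := by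
  rw [Lm_apply]
  rcases lt_trichotomy (q e.1) (q e.2) with h | h | h
  · rw [if_neg h.ne, if_pos h, Pi.single_apply]
    congr 1
    simp only [Prod.mk.injEq, eq_iff_iff]
    constructor
    · exact Or.inl
    · rintro (⟨h1, h2⟩ | ⟨h1, h2⟩)
      · exact ⟨h1, h2⟩
      · exact absurd (h1 ▸ h2 ▸ h) (asymm hab)
  · rw [if_pos h]
    rw [eq_comm]
    rw [if_neg]
    rintro (⟨h1, h2⟩ | ⟨h1, h2⟩)
    · exact hab.ne (h1 ▸ h2 ▸ h)
    · exact hab.ne' (h1 ▸ h2 ▸ h)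
  · rw [if_neg h.ne', if_neg (asymm h), Pi.single_apply]
    congr 1
    simp only [Prod.mk.injEq, eq_iff_iff]
    constructor
    · rintro ⟨h1, h2⟩; exact Or.inr ⟨h2, h1⟩
    · rintro (⟨h1, h2⟩ | ⟨h1, h2⟩)
      · exact absurd (h1 ▸ h2 ▸ h) (asymm hab)
      · exact ⟨h2, h1⟩

lemma count_le (e e' : Fin k × Fin k) (i j i' j' : Fin N)
    (hij : i ≠ j) (hij' : i' ≠ j') :
    ((Finset.univ.filter fun q : Fin k → Fin N =>
        ((q e.1 = i ∧ q e.2 = j) ∨ (q e.1 = j ∧ q e.2 = i)) ∧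
        ((q e'.1 = i' ∧ q e'.2 = j') ∨ (q e'.1 = j' ∧ q e'.2 = i'))).card)
      ≤ 4 * N ^ (k - ({e.1, e.2, e'.1, e'.2} : Finset (Fin k)).card) := by
  classical
  set S : Finset (Fin k) := {e.1, e.2, e'.1, e'.2} with hS
  have key : ∀ q q' : Fin k → Fin N,
      (((q e.1 = i ∧ q e.2 = j) ∨ (q e.1 = j ∧ q e.2 = i)) ∧
        ((q e'.1 = i' ∧ q e'.2 = j') ∨ (q e'.1 = j' ∧ q e'.2 = i'))) →
      (((q' e.1 = i ∧ q' e.2 = j) ∨ (q' e.1 = j ∧ q' e.2 = i)) ∧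
        ((q' e'.1 = i' ∧ q' e'.2 = j') ∨ (q' e'.1 = j' ∧ q' e'.2 = i'))) →
      (q e.1 = i ↔ q' e.1 = i) → (q e'.1 = i' ↔ q' e'.1 = i') →
      (∀ l ∉ S, q l = q' l) → q = q' := by
    intro q q' hq hq' h1 h2 h3
    have hee : q e.1 = q' e.1 ∧ q e.2 = q' e.2 := by
      rcases hq.1 with ⟨a1, a2⟩ | ⟨a1, a2⟩ <;> rcases hq'.1 with ⟨b1, b2⟩ | ⟨b1, b2⟩
      · exact ⟨a1.trans b1.symm, a2.trans b2.symm⟩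
      · exact absurd (b1.symm.trans (h1.mp a1)) (fun h => hij h.symm)
      · exact absurd (a1.symm.trans (h1.mpr b1)) (fun h => hij h.symm)
      · exact ⟨a1.trans b1.symm, a2.trans b2.symm⟩
    have hee' : q e'.1 = q' e'.1 ∧ q e'.2 = q' e'.2 := by
      rcases hq.2 with ⟨a1, a2⟩ | ⟨a1, a2⟩ <;> rcases hq'.2 with ⟨b1, b2⟩ | ⟨b1, b2⟩
      · exact ⟨a1.trans b1.symm, a2.trans b2.symm⟩
      · exact absurd (b1.symm.trans (h2.mp a1)) (fun h => hij' h.symm)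
      · exact absurd (a1.symm.trans (h2.mpr b1)) (fun h => hij' h.symm)
      · exact ⟨a1.trans b1.symm, a2.trans b2.symm⟩
    funext l
    by_cases hl : l ∈ S
    · simp only [hS, Finset.mem_insert, Finset.mem_singleton] at hl
      rcases hl with rfl | rfl | rfl | rfl
      · exact hee.1
      · exact hee.2
      · exact hee'.1
      · exact hee'.2
    · exact h3 l hl
  have hinj : Set.InjOn
      (fun q : Fin k → Fin N =>
        ((decide (q e.1 = i), decide (q e'.1 = i'),
          fun l : {l : Fin k // l ∉ S} => q l.1) :
          Bool × Bool × ({l : Fin k // l ∉ S} → Fin N)))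
      ((Finset.univ.filter fun q : Fin k → Fin N =>
        ((q e.1 = i ∧ q e.2 = j) ∨ (q e.1 = j ∧ q e.2 = i)) ∧
        ((q e'.1 = i' ∧ q e'.2 = j') ∨ (q e'.1 = j' ∧ q e'.2 = i'))) : Finset _) := by
    intro q hq q' hq' h
    simp only [Finset.coe_filter, Set.mem_setOf_eq, Finset.mem_univ, true_and] at hq hq'
    simp only [Prod.mk.injEq] at h
    refine key q q' hq hq' ?_ ?_ ?_
    · simpa [decide_eq_decide] using h.1
    · simpa [decide_eq_decide] using h.2.1
    · intro l hl
      exact congrFun h.2.2 ⟨l, hl⟩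
  calc ((Finset.univ.filter fun q : Fin k → Fin N =>
        ((q e.1 = i ∧ q e.2 = j) ∨ (q e.1 = j ∧ q e.2 = i)) ∧
        ((q e'.1 = i' ∧ q e'.2 = j') ∨ (q e'.1 = j' ∧ q e'.2 = i'))).card)
      ≤ (Finset.univ : Finset (Bool × Bool × ({l : Fin k // l ∉ S} → Fin N))).card :=
        Finset.card_le_card_of_injOn _ (fun q _ => Finset.mem_univ _) hinj
    _ = 4 * N ^ (k - S.card) := by
        rw [Finset.card_univ]
        simp only [Fintype.card_prod, Fintype.card_bool, Fintype.card_fun, Fintype.card_fin]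
        rw [Fintype.card_subtype_compl]
        simp [Fintype.card_fin]
        ring

end Aux

lemma card3_le {α : Type*} [DecidableEq α] (x y z : α) : ({x,y,z} : Finset α).card ≤ 3 := by
  apply le_trans (Finset.card_insert_le _ _)
  have := Finset.card_insert_le y ({z} : Finset α)
  simp at this ⊢
  omega

lemma card3_eq {α : Type*} [DecidableEq α] {x y z : α} (h1 : x ≠ y) (h2 : x ≠ z) (h3 : y ≠ z) :
    ({x,y,z} : Finset α).card = 3 := by
  rw [Finset.card_insert_of_notMem (by simp [h1, h2]),
    Finset.card_insert_of_notMem (by simp [h3]), Finset.card_singleton]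

lemma four_ne {α : Type*} [DecidableEq α] {a b c d : α}
    (h : ({a,b,c,d} : Finset α).card = 4) :
    a ≠ b ∧ a ≠ c ∧ a ≠ d ∧ b ≠ c ∧ b ≠ d ∧ c ≠ d := by
  refine ⟨?_, ?_, ?_, ?_, ?_, ?_⟩ <;> rintro rfl
  · rw [show ({a,a,c,d} : Finset α) = {a,c,d} by ext x; simp; try tauto] at h
    exact absurd (h ▸ card3_le a c d) (by norm_num)
  · rw [show ({a,b,a,d} : Finset α) = {a,b,d} by ext x; simp; try tauto] at h
    exact absurd (h ▸ card3_le a b d) (by norm_num)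
  · rw [show ({a,b,c,a} : Finset α) = {a,b,c} by ext x; simp; try tauto] at h
    exact absurd (h ▸ card3_le a b c) (by norm_num)
  · rw [show ({a,b,b,d} : Finset α) = {a,b,d} by ext x; simp; try tauto] at h
    exact absurd (h ▸ card3_le a b d) (by norm_num)
  · rw [show ({a,b,c,b} : Finset α) = {a,b,c} by ext x; simp; try tauto] at h
    exact absurd (h ▸ card3_le a b c) (by norm_num)
  · rw [show ({a,b,c,c} : Finset α) = {a,b,c} by ext x; simp; try tauto] at h
    exact absurd (h ▸ card3_le a b c) (by norm_num)

lemma three_le_card {α : Type*} [LinearOrder α] [DecidableEq α] {e e' : α × α}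
    (h1 : e.1 < e.2) (h2 : e'.1 < e'.2) (hne : e ≠ e') :
    3 ≤ ({e.1, e.2, e'.1, e'.2} : Finset α).card := by
  classical
  by_cases ha : e'.1 = e.1 ∨ e'.1 = e.2
  · have hx : e'.2 ≠ e.1 ∧ e'.2 ≠ e.2 := by
      rcases ha with ha | ha
      · refine ⟨fun hh => absurd (ha ▸ hh ▸ h2) (lt_irrefl _), fun hh => hne ?_⟩
        exact (Prod.ext ha hh).symm
      · have h3 : e.1 < e'.2 := h1.trans (ha ▸ h2)
        exact ⟨fun hh => absurd (hh ▸ h3) (lt_irrefl _),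
          fun hh => absurd (hh ▸ (ha ▸ h2)) (lt_irrefl _)⟩
    have hsub : ({e.1, e.2, e'.2} : Finset α) ⊆ {e.1, e.2, e'.1, e'.2} := by
      intro x; simp; tauto
    calc 3 = ({e.1, e.2, e'.2} : Finset α).card :=
          (card3_eq h1.ne (Ne.symm hx.1) (Ne.symm hx.2)).symm
      _ ≤ _ := Finset.card_le_card hsub
  · push_neg at ha
    have hsub : ({e.1, e.2, e'.1} : Finset α) ⊆ {e.1, e.2, e'.1, e'.2} := by
      intro x; simp; tauto
    calc 3 = ({e.1, e.2, e'.1} : Finset α).card :=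
          (card3_eq h1.ne (Ne.symm ha.1) (Ne.symm ha.2)).symm
      _ ≤ _ := Finset.card_le_card hsub

lemma countR3 {N k : ℕ} (hN : 0 < N) {e e' : Fin k × Fin k}
    (h1 : e.1 < e.2) (h2 : e'.1 < e'.2) (hne : e ≠ e') {i j i' j' : Fin N}
    (hij : i < j) (hij' : i' < j') :
    (((Finset.univ.filter fun q : Fin k → Fin N =>
        ((q e.1 = i ∧ q e.2 = j) ∨ (q e.1 = j ∧ q e.2 = i)) ∧
        ((q e'.1 = i' ∧ q e'.2 = j') ∨ (q e'.1 = j' ∧ q e'.2 = i'))).card : ℕ) : ℝ)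
      ≤ 4 * (N : ℝ) ^ (k - 2) / N := by
  have hS3 : 3 ≤ ({e.1, e.2, e'.1, e'.2} : Finset (Fin k)).card :=
    three_le_card h1 h2 hne
  have hSk : ({e.1, e.2, e'.1, e'.2} : Finset (Fin k)).card ≤ k := by
    simpa using Finset.card_le_univ ({e.1, e.2, e'.1, e'.2} : Finset (Fin k))
  have hcount := count_le e e' i j i' j' hij.ne hij'.ne
  have hpow : N ^ (k - ({e.1, e.2, e'.1, e'.2} : Finset (Fin k)).card) ≤ N ^ (k - 3) :=
    Nat.pow_le_pow_right hN (Nat.sub_le_sub_left hS3 k)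
  have hk3 : k - 2 = (k - 3) + 1 := by clear hcount hpow; omega
  refine le_trans (Nat.cast_le.mpr (le_trans hcount (Nat.mul_le_mul_left 4 hpow))) (le_of_eq ?_)
  rw [hk3]
  push_cast
  rw [pow_succ]
  field_simp

lemma countR4 {N k : ℕ} (hN : 0 < N) {e e' : Fin k × Fin k}
    (h1 : e.1 < e.2) (h2 : e'.1 < e'.2) {i j i' j' : Fin N}
    (hij : i < j) (hij' : i' < j')
    (hc4 : ({i, j, i', j'} : Finset (Fin N)).card = 4) :
    (((Finset.univ.filter fun q : Fin k → Fin N =>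
        ((q e.1 = i ∧ q e.2 = j) ∨ (q e.1 = j ∧ q e.2 = i)) ∧
        ((q e'.1 = i' ∧ q e'.2 = j') ∨ (q e'.1 = j' ∧ q e'.2 = i'))).card : ℕ) : ℝ)
      ≤ 4 * (N : ℝ) ^ (k - 2) / (N : ℝ) ^ 2 := by
  rcases Finset.eq_empty_or_nonempty (Finset.univ.filter fun q : Fin k → Fin N =>
        ((q e.1 = i ∧ q e.2 = j) ∨ (q e.1 = j ∧ q e.2 = i)) ∧
        ((q e'.1 = i' ∧ q e'.2 = j') ∨ (q e'.1 = j' ∧ q e'.2 = i'))) with hemp | hne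
  · rw [hemp]
    simp only [Finset.card_empty, Nat.cast_zero]
    positivity
  · obtain ⟨q, hq⟩ := hne
    rw [Finset.mem_filter] at hq
    obtain ⟨-, hq1, hq2⟩ := hq
    obtain ⟨hab, hac, had, hbc, hbd, hcd⟩ := four_ne hc4
    have hv1 : q e.1 = i ∨ q e.1 = j := by
      rcases hq1 with ⟨h, -⟩ | ⟨h, -⟩ <;> [exact Or.inl h; exact Or.inr h]
    have hv2 : q e.2 = i ∨ q e.2 = j := by
      rcases hq1 with ⟨-, h⟩ | ⟨-, h⟩ <;> [exact Or.inr h; exact Or.inl h]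
    have hv1' : q e'.1 = i' ∨ q e'.1 = j' := by
      rcases hq2 with ⟨h, -⟩ | ⟨h, -⟩ <;> [exact Or.inl h; exact Or.inr h]
    have hv2' : q e'.2 = i' ∨ q e'.2 = j' := by
      rcases hq2 with ⟨-, h⟩ | ⟨-, h⟩ <;> [exact Or.inr h; exact Or.inl h]
    have disj : ∀ x : Fin N, (x = i ∨ x = j) → (x = i' ∨ x = j') → False := by
      rintro x (rfl | rfl) (h | h)
      · exact hac h
      · exact had h
      · exact hbc h
      · exact hbd h
    have d13 : e.1 ≠ e'.1 := fun h => disj _ hv1 (h ▸ hv1')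
    have d14 : e.1 ≠ e'.2 := fun h => disj _ hv1 (h ▸ hv2')
    have d23 : e.2 ≠ e'.1 := fun h => disj _ hv2 (h ▸ hv1')
    have d24 : e.2 ≠ e'.2 := fun h => disj _ hv2 (h ▸ hv2')
    have hScard : ({e.1, e.2, e'.1, e'.2} : Finset (Fin k)).card = 4 := by
      rw [Finset.card_insert_of_notMem (by simp [h1.ne, d13, d14]),
        Finset.card_insert_of_notMem (by simp [d23, d24]),
        Finset.card_insert_of_notMem (by simp [h2.ne]), Finset.card_singleton]
    have hSk : ({e.1, e.2, e'.1, e'.2} : Finset (Fin k)).card ≤ k := by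
      simpa using Finset.card_le_univ ({e.1, e.2, e'.1, e'.2} : Finset (Fin k))
    have hk4 : 4 ≤ k := hScard ▸ hSk
    have hcount := count_le e e' i j i' j' hij.ne hij'.ne
    rw [hScard] at hcount
    have hk3 : k - 2 = (k - 4) + 2 := by clear hcount; omega
    refine le_trans (Nat.cast_le.mpr hcount) (le_of_eq ?_)
    rw [hk3]
    push_cast
    rw [pow_add]
    field_simp

lemma final_sum {α : Type*} [DecidableEq α] (E : Finset α) (f : α → α → ℝ) {c R : ℝ}
    (hc : 0 < c) (hR : 0 < R)
    (hf : ∀ e ∈ E, ∀ e' ∈ E.erase e, f e e' ≤ 4 * c / R) :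
    c⁻¹ * ∑ e ∈ E, ∑ e' ∈ E.erase e, f e e'
      ≤ 4 * E.card * ((E.card : ℝ) - 1) / R := by
  have h1 : ∑ e ∈ E, ∑ e' ∈ E.erase e, f e e'
      ≤ ∑ e ∈ E, ∑ _e' ∈ E.erase e, (4 * c / R) :=
    Finset.sum_le_sum fun e he => Finset.sum_le_sum (hf e he)
  have h2 : ∑ e ∈ E, ∑ _e' ∈ E.erase e, (4 * c / R)
      = (E.card : ℝ) * (((E.card - 1 : ℕ) : ℝ) * (4 * c / R)) := by
    rw [Finset.sum_congr rfl (fun e he => by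
      rw [Finset.sum_const, Finset.card_erase_of_mem he, nsmul_eq_mul])]
    rw [Finset.sum_const, nsmul_eq_mul]
  rcases Finset.eq_empty_or_nonempty E with rfl | hEne
  · simp
  have hpos : 0 < E.card := Finset.card_pos.mpr hEne
  have h3 : ((E.card - 1 : ℕ) : ℝ) * (4 * c / R) ≤ ((E.card : ℝ) - 1) * (4 * c / R) := by
    apply mul_le_mul_of_nonneg_right _ (by positivity)
    rw [Nat.cast_sub hpos]
    push_cast
    exact le_refl _
  calc c⁻¹ * ∑ e ∈ E, ∑ e' ∈ E.erase e, f e e'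
      ≤ c⁻¹ * ((E.card : ℝ) * (((E.card - 1 : ℕ) : ℝ) * (4 * c / R))) := by
        apply mul_le_mul_of_nonneg_left (h1.trans (le_of_eq h2)) (by positivity)
    _ ≤ c⁻¹ * ((E.card : ℝ) * (((E.card : ℝ) - 1) * (4 * c / R))) := by
        apply mul_le_mul_of_nonneg_left
          (mul_le_mul_of_nonneg_left h3 (by positivity)) (by positivity)
    _ = 4 * E.card * ((E.card : ℝ) - 1) / R := by
        have hc' : c ≠ 0 := hc.ne'
        have hR' : R ≠ 0 := hR.ne'
        field_simp

theorem stmt_14 (N k : ℕ) (hk : 2 ≤ k)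
    (E : Finset (Fin k × Fin k)) (hE : ∀ e ∈ E, e.1 < e.2)
    (T : ((Fin N × Fin N) → ℝ) → ℝ)
    (hT : ∀ y, T y = (∑ q : Fin k → Fin N, ∏ e ∈ E,
        (if q e.1 = q e.2 then 0
         else if q e.1 < q e.2 then y (q e.1, q e.2) else y (q e.2, q e.1)))
      / (N : ℝ) ^ (k - 2)) :
    ∀ y : (Fin N × Fin N) → ℝ, (∀ c, y c ∈ Set.Icc (0:ℝ) 1) →
      ∀ i j i' j' : Fin N, i < j → i' < j' →
        ((({i, j, i', j'} : Finset (Fin N)).card = 4 →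
          |fderiv ℝ (fun z => fderiv ℝ T z (Pi.single (i, j) 1)) y
              (Pi.single (i', j') 1)|
            ≤ 4 * E.card * (E.card - 1) / (N : ℝ) ^ 2) ∧
        (({i, j, i', j'} : Finset (Fin N)).card = 2 ∨
            ({i, j, i', j'} : Finset (Fin N)).card = 3 →
          |fderiv ℝ (fun z => fderiv ℝ T z (Pi.single (i, j) 1)) y
              (Pi.single (i', j') 1)|
            ≤ 4 * E.card * (E.card - 1) / (N : ℝ))) := by
  classical
  intro y hy i j i' j' hij hij'
  have hN : 0 < N := i.pos
  have hNR : (0 : ℝ) < N := by exact_mod_cast hN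
  set c : ℝ := (N : ℝ) ^ (k - 2) with hc
  have hcpos : 0 < c := by positivity
  set v : (Fin N × Fin N) → ℝ := Pi.single (i, j) 1 with hv
  set w : (Fin N × Fin N) → ℝ := Pi.single (i', j') 1 with hw
  have hT' : T = fun z => (∑ q : Fin k → Fin N, ∏ e ∈ E, Lm q e z) * c⁻¹ := by
    funext z
    rw [hT z, div_eq_mul_inv]
    congr 1
    exact Finset.sum_congr rfl fun q _ => Finset.prod_congr rfl fun e _ =>
      (Lm_apply q e z).symm
  have hD1 : ∀ z, HasFDerivAt T
      (c⁻¹ • ∑ q : Fin k → Fin N, ∑ e ∈ E, (∏ e' ∈ E.erase e, Lm q e' z) • Lm q e) z := by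
    intro z
    rw [hT']
    exact (HasFDerivAt.fun_sum fun q _ =>
      HasFDerivAt.finset_prod fun e _ => (Lm q e).hasFDerivAt).mul_const _
  have h1 : (fun z => fderiv ℝ T z v) = fun z =>
      c⁻¹ * ∑ q : Fin k → Fin N, ∑ e ∈ E, (∏ e' ∈ E.erase e, Lm q e' z) * Lm q e v := by
    funext z
    rw [(hD1 z).fderiv]
    simp [ContinuousLinearMap.smul_apply, ContinuousLinearMap.sum_apply, smul_eq_mul]
  rw [h1]
  have hD2 : HasFDerivAt (fun z =>
      c⁻¹ * ∑ q : Fin k → Fin N, ∑ e ∈ E, (∏ e' ∈ E.erase e, Lm q e' z) * Lm q e v)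
      (c⁻¹ • ∑ q : Fin k → Fin N, ∑ e ∈ E, (Lm q e v) •
        ∑ e' ∈ E.erase e, (∏ e'' ∈ (E.erase e).erase e', Lm q e'' y) • Lm q e') y :=
    HasFDerivAt.const_mul (HasFDerivAt.fun_sum fun q _ => HasFDerivAt.fun_sum fun e _ =>
      (HasFDerivAt.finset_prod fun e' _ => (Lm q e').hasFDerivAt).mul_const _) _
  rw [hD2.fderiv]
  have happ : (c⁻¹ • ∑ q : Fin k → Fin N, ∑ e ∈ E, (Lm q e v) •
        ∑ e' ∈ E.erase e, (∏ e'' ∈ (E.erase e).erase e', Lm q e'' y) • Lm q e') w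
      = c⁻¹ * ∑ q : Fin k → Fin N, ∑ e ∈ E, (Lm q e v) *
        ∑ e' ∈ E.erase e, (∏ e'' ∈ (E.erase e).erase e', Lm q e'' y) * Lm q e' w := by
    simp [ContinuousLinearMap.smul_apply, ContinuousLinearMap.sum_apply, smul_eq_mul]
  rw [happ]
  -- basic bounds
  have hLv : ∀ (q : Fin k → Fin N) (e : Fin k × Fin k),
      Lm q e v = if (q e.1 = i ∧ q e.2 = j) ∨ (q e.1 = j ∧ q e.2 = i) then 1 else 0 :=
    fun q e => by rw [hv]; exact Lm_single q e hij
  have hLw : ∀ (q : Fin k → Fin N) (e : Fin k × Fin k),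
      Lm q e w = if (q e.1 = i' ∧ q e.2 = j') ∨ (q e.1 = j' ∧ q e.2 = i') then 1 else 0 :=
    fun q e => by rw [hw]; exact Lm_single q e hij'
  have hLv01 : ∀ (q : Fin k → Fin N) (e : Fin k × Fin k),
      0 ≤ Lm q e v ∧ Lm q e v ≤ 1 := by
    intro q e; rw [hLv q e]; split_ifs <;> norm_num
  have hLw01 : ∀ (q : Fin k → Fin N) (e : Fin k × Fin k),
      0 ≤ Lm q e w ∧ Lm q e w ≤ 1 := by
    intro q e; rw [hLw q e]; split_ifs <;> norm_num
  have hA01 : ∀ (q : Fin k → Fin N) (e e' : Fin k × Fin k),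
      0 ≤ (∏ e'' ∈ (E.erase e).erase e', Lm q e'' y) ∧
      (∏ e'' ∈ (E.erase e).erase e', Lm q e'' y) ≤ 1 :=
    fun q e e' =>
      ⟨Finset.prod_nonneg fun e'' _ => (Lm_mem q e'' hy).1,
       Finset.prod_le_one (fun e'' _ => (Lm_mem q e'' hy).1)
         (fun e'' _ => (Lm_mem q e'' hy).2)⟩
  have inner_nonneg : ∀ (q : Fin k → Fin N) (e : Fin k × Fin k),
      0 ≤ ∑ e' ∈ E.erase e, (∏ e'' ∈ (E.erase e).erase e', Lm q e'' y) * Lm q e' w :=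
    fun q e => Finset.sum_nonneg fun e' _ => mul_nonneg (hA01 q e e').1 (hLw01 q e').1
  have S_nonneg : 0 ≤ ∑ q : Fin k → Fin N, ∑ e ∈ E, (Lm q e v) *
        ∑ e' ∈ E.erase e, (∏ e'' ∈ (E.erase e).erase e', Lm q e'' y) * Lm q e' w :=
    Finset.sum_nonneg fun q _ => Finset.sum_nonneg fun e _ =>
      mul_nonneg (hLv01 q e).1 (inner_nonneg q e)
  have habs : |c⁻¹ * ∑ q : Fin k → Fin N, ∑ e ∈ E, (Lm q e v) *
        ∑ e' ∈ E.erase e, (∏ e'' ∈ (E.erase e).erase e', Lm q e'' y) * Lm q e' w|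
      = c⁻¹ * ∑ q : Fin k → Fin N, ∑ e ∈ E, (Lm q e v) *
        ∑ e' ∈ E.erase e, (∏ e'' ∈ (E.erase e).erase e', Lm q e'' y) * Lm q e' w :=
    abs_of_nonneg (mul_nonneg (by positivity) S_nonneg)
  have hSle : (∑ q : Fin k → Fin N, ∑ e ∈ E, (Lm q e v) *
        ∑ e' ∈ E.erase e, (∏ e'' ∈ (E.erase e).erase e', Lm q e'' y) * Lm q e' w)
      ≤ ∑ e ∈ E, ∑ e' ∈ E.erase e,
          (((Finset.univ.filter fun q : Fin k → Fin N =>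
            ((q e.1 = i ∧ q e.2 = j) ∨ (q e.1 = j ∧ q e.2 = i)) ∧
            ((q e'.1 = i' ∧ q e'.2 = j') ∨ (q e'.1 = j' ∧ q e'.2 = i'))).card : ℕ) : ℝ) := by
    calc (∑ q : Fin k → Fin N, ∑ e ∈ E, (Lm q e v) *
          ∑ e' ∈ E.erase e, (∏ e'' ∈ (E.erase e).erase e', Lm q e'' y) * Lm q e' w)
        ≤ ∑ q : Fin k → Fin N, ∑ e ∈ E, ∑ e' ∈ E.erase e, Lm q e v * Lm q e' w := by
          refine Finset.sum_le_sum fun q _ => Finset.sum_le_sum fun e _ => ?_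
          rw [Finset.mul_sum]
          refine Finset.sum_le_sum fun e' _ => ?_
          exact mul_le_mul_of_nonneg_left
            (mul_le_of_le_one_left (hLw01 q e').1 (hA01 q e e').2) (hLv01 q e).1
      _ = ∑ e ∈ E, ∑ e' ∈ E.erase e, ∑ q : Fin k → Fin N, Lm q e v * Lm q e' w := by
          rw [Finset.sum_comm]
          exact Finset.sum_congr rfl fun e _ => Finset.sum_comm
      _ = ∑ e ∈ E, ∑ e' ∈ E.erase e,
          (((Finset.univ.filter fun q : Fin k → Fin N =>
            ((q e.1 = i ∧ q e.2 = j) ∨ (q e.1 = j ∧ q e.2 = i)) ∧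
            ((q e'.1 = i' ∧ q e'.2 = j') ∨ (q e'.1 = j' ∧ q e'.2 = i'))).card : ℕ) : ℝ) := by
          refine Finset.sum_congr rfl fun e _ => Finset.sum_congr rfl fun e' _ => ?_
          rw [← Finset.sum_boole]
          refine Finset.sum_congr rfl fun q _ => ?_
          rw [hLv q e, hLw q e']
          by_cases hA : (q e.1 = i ∧ q e.2 = j) ∨ (q e.1 = j ∧ q e.2 = i) <;>
            by_cases hB : (q e'.1 = i' ∧ q e'.2 = j') ∨ (q e'.1 = j' ∧ q e'.2 = i') <;>
            simp [hA, hB]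
  constructor
  · intro h4
    rw [habs]
    refine le_trans (mul_le_mul_of_nonneg_left hSle (by positivity)) ?_
    exact final_sum E _ hcpos (by positivity) fun e he e' he' => by
      rw [Finset.mem_erase] at he'
      exact countR4 hN (hE e he) (hE e' he'.2) hij hij' h4
  · intro _
    rw [habs]
    refine le_trans (mul_le_mul_of_nonneg_left hSle (by positivity)) ?_
    exact final_sum E _ hcpos hNR fun e he e' he' => by
      rw [Finset.mem_erase] at he'
      exact countR3 hN (hE e he) (hE e' he'.2) he'.1.symm hij hij'
end

section
/- Let A, B be sets of edges of the complete graph K_r on [r], and let e = {α,β} be an edge in neither A nor B. For x, y ∈ [0,1]^{n} (indexed by pairs from [N], symmetric, zero diagonal), define P(x,q,A) = ∏_{{a,b}∈A} x_{q_a q_b} for q ∈ [N]^r. Then |∑_{q∈[N]^r} P(x,q,A) P(y,q,B) (x_{q_α q_β} − y_{q_α q_β})| ≤ N^{r-1} ‖x−y‖_op, where ‖x−y‖_op is the operator norm of the symmetric matrix with entries x_{ij} − y_{ij}. -/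
open Finset in
lemma inner_bound (N : ℕ) (M : Matrix (Fin N) (Fin N) ℝ) (u v : Fin N → ℝ)
    (hu : ∀ a, u a ∈ Set.Icc (0:ℝ) 1) (hv : ∀ a, v a ∈ Set.Icc (0:ℝ) 1) :
    |∑ a : Fin N, ∑ b : Fin N, u a * M a b * v b|
      ≤ (N : ℝ) * ‖Matrix.toEuclideanCLM (𝕜 := ℝ) M‖ := by
  set u' : EuclideanSpace ℝ (Fin N) := (WithLp.equiv 2 _).symm u with hu'
  set v' : EuclideanSpace ℝ (Fin N) := (WithLp.equiv 2 _).symm v with hv'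
  have key : ∑ a : Fin N, ∑ b : Fin N, u a * M a b * v b
      = inner ℝ u' (Matrix.toEuclideanCLM (𝕜 := ℝ) M v') := by
    rw [hv', WithLp.equiv_symm_apply, Matrix.toEuclideanCLM_toLp, hu', WithLp.equiv_symm_apply]
    rw [PiLp.inner_apply]
    simp only [PiLp.toLp_apply, RCLike.inner_apply, starRingEnd_apply, star_trivial,
      Matrix.toLin'_apply, Matrix.mulVec, dotProduct]
    rw [Finset.sum_congr rfl]
    intro a _
    rw [Finset.sum_mul]
    exact Finset.sum_congr rfl fun b _ => by ring
  rw [key]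
  have hnu : ‖u'‖ ≤ Real.sqrt N := by
    rw [EuclideanSpace.norm_eq]
    apply Real.sqrt_le_sqrt
    calc ∑ i, ‖u' i‖ ^ 2 ≤ ∑ _i : Fin N, (1:ℝ) := by
          apply Finset.sum_le_sum
          intro i _
          have := hu i
          have : ‖u' i‖ ≤ 1 := by
            simp only [hu', WithLp.equiv_symm_apply, PiLp.toLp_apply, Real.norm_eq_abs]
            rw [abs_le]
            constructor <;> [linarith [(hu i).1]; exact (hu i).2]
          nlinarith [norm_nonneg (u' i)]
      _ = (N : ℝ) := by simp
  have hnv : ‖v'‖ ≤ Real.sqrt N := by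
    rw [EuclideanSpace.norm_eq]
    apply Real.sqrt_le_sqrt
    calc ∑ i, ‖v' i‖ ^ 2 ≤ ∑ _i : Fin N, (1:ℝ) := by
          apply Finset.sum_le_sum
          intro i _
          have : ‖v' i‖ ≤ 1 := by
            simp only [hv', WithLp.equiv_symm_apply, PiLp.toLp_apply, Real.norm_eq_abs]
            rw [abs_le]
            constructor <;> [linarith [(hv i).1]; exact (hv i).2]
          nlinarith [norm_nonneg (v' i)]
      _ = (N : ℝ) := by simp
  calc |inner ℝ u' (Matrix.toEuclideanCLM (𝕜 := ℝ) M v')|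
      ≤ ‖u'‖ * ‖Matrix.toEuclideanCLM (𝕜 := ℝ) M v'‖ := abs_real_inner_le_norm _ _
    _ ≤ Real.sqrt N * (‖Matrix.toEuclideanCLM (𝕜 := ℝ) M‖ * Real.sqrt N) := by
        apply mul_le_mul hnu ?_ (norm_nonneg _) (Real.sqrt_nonneg _)
        calc ‖Matrix.toEuclideanCLM (𝕜 := ℝ) M v'‖
            ≤ ‖Matrix.toEuclideanCLM (𝕜 := ℝ) M‖ * ‖v'‖ := ContinuousLinearMap.le_opNorm _ _
          _ ≤ _ := by
              apply mul_le_mul_of_nonneg_left hnv (norm_nonneg _)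
    _ = (N : ℝ) * ‖Matrix.toEuclideanCLM (𝕜 := ℝ) M‖ := by
        rw [show Real.sqrt N * (‖Matrix.toEuclideanCLM (𝕜 := ℝ) M‖ * Real.sqrt N)
          = (Real.sqrt N * Real.sqrt N) * ‖Matrix.toEuclideanCLM (𝕜 := ℝ) M‖ by ring,
          Real.mul_self_sqrt (Nat.cast_nonneg N)]

noncomputable section

def entf {N r : ℕ} (α β : Fin r) (f : {j : Fin r // j ≠ α ∧ j ≠ β} → Fin N)
    (a b : Fin N) (j : Fin r) : Fin N :=
  if h1 : j = α then a else if h2 : j = β then b else f ⟨j, h1, h2⟩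

lemma entf_alpha {N r : ℕ} (α β : Fin r) (f : {j : Fin r // j ≠ α ∧ j ≠ β} → Fin N)
    (a b : Fin N) : entf α β f a b α = a := by simp [entf]

lemma entf_beta {N r : ℕ} (α β : Fin r) (hne : α ≠ β)
    (f : {j : Fin r // j ≠ α ∧ j ≠ β} → Fin N) (a b : Fin N) :
    entf α β f a b β = b := by simp [entf, hne.symm]

lemma entf_congr_b {N r : ℕ} (α β : Fin r) (f : {j : Fin r // j ≠ α ∧ j ≠ β} → Fin N)
    (a b b' : Fin N) {j : Fin r} (h : j ≠ β) :
    entf α β f a b j = entf α β f a b' j := by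
  simp [entf, h]

lemma entf_congr_a {N r : ℕ} (α β : Fin r) (f : {j : Fin r // j ≠ α ∧ j ≠ β} → Fin N)
    (a a' b : Fin N) {j : Fin r} (h : j ≠ α) :
    entf α β f a b j = entf α β f a' b j := by
  simp [entf, h]

def entEquiv {N r : ℕ} (α β : Fin r) (hne : α ≠ β) :
    (Fin r → Fin N) ≃ ({j : Fin r // j ≠ α ∧ j ≠ β} → Fin N) × Fin N × Fin N where
  toFun q := (fun j => q j.1, q α, q β)
  invFun p := entf α β p.1 p.2.1 p.2.2
  left_inv q := by
    funext j
    show (if h1 : j = α then q α else if h2 : j = β then q β else q j) = q j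
    split_ifs with h1 h2
    · rw [h1]
    · rw [h2]
    · rfl
  right_inv p := by
    obtain ⟨f, a, b⟩ := p
    refine Prod.ext ?_ (Prod.ext ?_ ?_)
    · funext j
      simp [entf, j.2.1, j.2.2]
    · simp [entf]
    · simp [entf, hne.symm]

lemma split_prod {N r : ℕ} (X : Matrix (Fin N) (Fin N) ℝ)
    (A : Finset (Fin r × Fin r)) (hA : ∀ e ∈ A, e.1 < e.2)
    (α β : Fin r) (hαβ : α < β) (heA : (α, β) ∉ A)
    (f : {j : Fin r // j ≠ α ∧ j ≠ β} → Fin N) (a b c₀ : Fin N) :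
    ∏ e ∈ A, X (entf α β f a b e.1) (entf α β f a b e.2)
    = (∏ e ∈ A.filter (fun e => e.1 = α ∨ e.2 = α),
        X (entf α β f a c₀ e.1) (entf α β f a c₀ e.2))
      * ((∏ e ∈ (A.filter (fun e => ¬(e.1 = α ∨ e.2 = α))).filter
            (fun e => e.1 = β ∨ e.2 = β),
          X (entf α β f c₀ b e.1) (entf α β f c₀ b e.2))
        * (∏ e ∈ (A.filter (fun e => ¬(e.1 = α ∨ e.2 = α))).filter
            (fun e => ¬(e.1 = β ∨ e.2 = β)),
          X (entf α β f c₀ c₀ e.1) (entf α β f c₀ c₀ e.2))) := by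
  rw [← Finset.prod_filter_mul_prod_filter_not A (fun e => e.1 = α ∨ e.2 = α),
      ← Finset.prod_filter_mul_prod_filter_not
        (A.filter (fun e => ¬(e.1 = α ∨ e.2 = α))) (fun e => e.1 = β ∨ e.2 = β)]
  congr 1
  · apply Finset.prod_congr rfl
    intro e he
    rw [Finset.mem_filter] at he
    obtain ⟨heA', hpe⟩ := he
    have h1 : e.1 ≠ β ∧ e.2 ≠ β := by
      rcases hpe with h | h
      · refine ⟨by rw [h]; exact ne_of_lt hαβ, fun hb => heA ?_⟩
        have : e = (α, β) := Prod.ext h hb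
        rwa [this] at heA'
      · have hlt := hA e heA'
        rw [h] at hlt
        exact ⟨ne_of_lt (hlt.trans hαβ), by rw [h]; exact ne_of_lt hαβ⟩
    rw [entf_congr_b α β f a b c₀ h1.1, entf_congr_b α β f a b c₀ h1.2]
  · congr 1
    · apply Finset.prod_congr rfl
      intro e he
      simp only [Finset.mem_filter, not_or] at he
      obtain ⟨⟨-, h1, h2⟩, -⟩ := he
      rw [entf_congr_a α β f a c₀ b h1, entf_congr_a α β f a c₀ b h2]
    · apply Finset.prod_congr rfl
      intro e he
      simp only [Finset.mem_filter, not_or] at he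
      obtain ⟨⟨-, h1, h2⟩, h3, h4⟩ := he
      rw [entf_congr_a α β f a c₀ b h1, entf_congr_a α β f a c₀ b h2,
          entf_congr_b α β f c₀ b c₀ h3, entf_congr_b α β f c₀ b c₀ h4]

lemma prod_mem_Icc {ι : Type*} (s : Finset ι) (g : ι → ℝ)
    (h : ∀ i ∈ s, g i ∈ Set.Icc (0:ℝ) 1) : (∏ i ∈ s, g i) ∈ Set.Icc (0:ℝ) 1 :=
  ⟨Finset.prod_nonneg (fun i hi => (h i hi).1),
   Finset.prod_le_one (fun i hi => (h i hi).1) (fun i hi => (h i hi).2)⟩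

lemma mul_mem_Icc {x y : ℝ} (hx : x ∈ Set.Icc (0:ℝ) 1) (hy : y ∈ Set.Icc (0:ℝ) 1) :
    x * y ∈ Set.Icc (0:ℝ) 1 := by
  obtain ⟨h1, h2⟩ := hx; obtain ⟨h3, h4⟩ := hy
  constructor
  · positivity
  · nlinarith

end
theorem stmt_15 (N r : ℕ)
    (X Y : Matrix (Fin N) (Fin N) ℝ)
    (hXs : X.IsSymm) (hYs : Y.IsSymm)
    (hXd : ∀ i, X i i = 0) (hYd : ∀ i, Y i i = 0)
    (hX : ∀ i j, X i j ∈ Set.Icc (0:ℝ) 1) (hY : ∀ i j, Y i j ∈ Set.Icc (0:ℝ) 1)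
    (A B : Finset (Fin r × Fin r))
    (hA : ∀ e ∈ A, e.1 < e.2) (hB : ∀ e ∈ B, e.1 < e.2)
    (α β : Fin r) (hαβ : α < β) (heA : (α, β) ∉ A) (heB : (α, β) ∉ B) :
    |∑ q : Fin r → Fin N,
        (∏ e ∈ A, X (q e.1) (q e.2)) * (∏ e ∈ B, Y (q e.1) (q e.2)) *
          (X (q α) (q β) - Y (q α) (q β))|
      ≤ (N : ℝ) ^ (r - 1) * ‖Matrix.toEuclideanCLM (𝕜 := ℝ) (X - Y)‖ := by
  classical
  rcases Nat.eq_zero_or_pos N with hN0 | hNpos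
  · subst hN0
    haveI : IsEmpty (Fin r → Fin 0) := ⟨fun q => (q α).elim0⟩
    rw [Finset.univ_eq_empty, Finset.sum_empty, abs_zero]
    positivity
  have hne : α ≠ β := ne_of_lt hαβ
  have hr2 : 2 ≤ r := by
    have h1 : (α : ℕ) < (β : ℕ) := hαβ
    have h2 : (β : ℕ) < r := β.isLt
    omega
  set c₀ : Fin N := ⟨0, hNpos⟩ with hc₀
  set nrm : ℝ := ‖Matrix.toEuclideanCLM (𝕜 := ℝ) (X - Y)‖ with hnrm
  set T : (Fin r → Fin N) → ℝ := fun q =>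
    (∏ e ∈ A, X (q e.1) (q e.2)) * (∏ e ∈ B, Y (q e.1) (q e.2)) *
      (X (q α) (q β) - Y (q α) (q β)) with hT
  have hsum : (∑ q : Fin r → Fin N, T q)
      = ∑ p : ({j : Fin r // j ≠ α ∧ j ≠ β} → Fin N) × Fin N × Fin N,
          T (entf α β p.1 p.2.1 p.2.2) :=
    Fintype.sum_equiv (entEquiv α β hne) _ _
      (fun q => (congrArg T ((entEquiv α β hne).left_inv q)).symm)
  rw [hsum]
  simp only [Fintype.sum_prod_type]
  have key : ∀ f : {j : Fin r // j ≠ α ∧ j ≠ β} → Fin N,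
      |∑ a : Fin N, ∑ b : Fin N, T (entf α β f a b)| ≤ (N : ℝ) * nrm := by
    intro f
    set u : Fin N → ℝ := fun a =>
      (∏ e ∈ A.filter (fun e => e.1 = α ∨ e.2 = α),
        X (entf α β f a c₀ e.1) (entf α β f a c₀ e.2))
      * (∏ e ∈ B.filter (fun e => e.1 = α ∨ e.2 = α),
        Y (entf α β f a c₀ e.1) (entf α β f a c₀ e.2)) with hu
    set v : Fin N → ℝ := fun b =>
      (∏ e ∈ (A.filter (fun e => ¬(e.1 = α ∨ e.2 = α))).filter
            (fun e => e.1 = β ∨ e.2 = β),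
        X (entf α β f c₀ b e.1) (entf α β f c₀ b e.2))
      * (∏ e ∈ (B.filter (fun e => ¬(e.1 = α ∨ e.2 = α))).filter
            (fun e => e.1 = β ∨ e.2 = β),
        Y (entf α β f c₀ b e.1) (entf α β f c₀ b e.2)) with hv
    set c : ℝ :=
      (∏ e ∈ (A.filter (fun e => ¬(e.1 = α ∨ e.2 = α))).filter
            (fun e => ¬(e.1 = β ∨ e.2 = β)),
        X (entf α β f c₀ c₀ e.1) (entf α β f c₀ c₀ e.2))
      * (∏ e ∈ (B.filter (fun e => ¬(e.1 = α ∨ e.2 = α))).filter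
            (fun e => ¬(e.1 = β ∨ e.2 = β)),
        Y (entf α β f c₀ c₀ e.1) (entf α β f c₀ c₀ e.2)) with hc
    have hu01 : ∀ a, u a ∈ Set.Icc (0:ℝ) 1 := fun a =>
      mul_mem_Icc (prod_mem_Icc _ _ (fun e _ => hX _ _)) (prod_mem_Icc _ _ (fun e _ => hY _ _))
    have hv01 : ∀ b, v b ∈ Set.Icc (0:ℝ) 1 := fun b =>
      mul_mem_Icc (prod_mem_Icc _ _ (fun e _ => hX _ _)) (prod_mem_Icc _ _ (fun e _ => hY _ _))
    have hc01 : c ∈ Set.Icc (0:ℝ) 1 :=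
      mul_mem_Icc (prod_mem_Icc _ _ (fun e _ => hX _ _)) (prod_mem_Icc _ _ (fun e _ => hY _ _))
    have hTexp : ∀ a b : Fin N,
        T (entf α β f a b) = c * (u a * (X - Y) a b * v b) := by
      intro a b
      simp only [hT]
      rw [split_prod X A hA α β hαβ heA f a b c₀,
          split_prod Y B hB α β hαβ heB f a b c₀,
          entf_alpha, entf_beta α β hne]
      simp only [hu, hv, hc, Matrix.sub_apply]
      ring
    calc |∑ a : Fin N, ∑ b : Fin N, T (entf α β f a b)|
        = |c| * |∑ a : Fin N, ∑ b : Fin N, u a * (X - Y) a b * v b| := by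
          simp only [hTexp, ← Finset.mul_sum]
          rw [abs_mul]
      _ ≤ 1 * ((N : ℝ) * nrm) := by
          apply mul_le_mul _ (inner_bound N (X - Y) u v hu01 hv01) (abs_nonneg _) zero_le_one
          rw [abs_of_nonneg hc01.1]
          exact hc01.2
      _ = (N : ℝ) * nrm := one_mul _
  have hS : Fintype.card {j : Fin r // j ≠ α ∧ j ≠ β} = r - 2 := by
    rw [Fintype.card_subtype]
    have heq : Finset.filter (fun j => j ≠ α ∧ j ≠ β) Finset.univ
        = (Finset.univ : Finset (Fin r)) \ {α, β} := by
      ext j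
      simp [not_or]
    rw [heq, Finset.card_sdiff_of_subset (Finset.subset_univ _), Finset.card_univ, Fintype.card_fin,
        Finset.card_insert_of_notMem (by simp [hne]), Finset.card_singleton]
  calc |∑ f : {j : Fin r // j ≠ α ∧ j ≠ β} → Fin N,
          ∑ a : Fin N, ∑ b : Fin N, T (entf α β f a b)|
      ≤ ∑ f : {j : Fin r // j ≠ α ∧ j ≠ β} → Fin N,
          |∑ a : Fin N, ∑ b : Fin N, T (entf α β f a b)| :=
        Finset.abs_sum_le_sum_abs _ _
    _ ≤ ∑ _f : {j : Fin r // j ≠ α ∧ j ≠ β} → Fin N, (N : ℝ) * nrm :=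
        Finset.sum_le_sum (fun f _ => key f)
    _ = (Fintype.card ({j : Fin r // j ≠ α ∧ j ≠ β} → Fin N) : ℝ) * ((N : ℝ) * nrm) := by
        rw [Finset.sum_const, nsmul_eq_mul, Finset.card_univ]
    _ = (N : ℝ) ^ (r - 1) * nrm := by
        rw [Fintype.card_fun, Fintype.card_fin, hS]
        push_cast
        rw [← mul_assoc, ← pow_succ]
        congr 2
        omega
end

section
/- Define φ_p(t) := inf{ I_p(x) : x ∈ [0,1]^n, T(x) ≥ tn } where T is the homomorphism counting function of a graph H with m edges, n = N(N-1)/2, I_p(x) = ∑_{i<j} (x_{ij} log(x_{ij}/p) + (1-x_{ij}) log((1-x_{ij})/(1-p))). Let t_0 = T(𝟙)/n, where 𝟙 is the all-ones vector. Then for any 0 < δ < t < t_0, φ_p(t−δ) ≥ φ_p(t) − (δ/(t_0−t))^{1/m} · n log(1/p). -/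
open Real Finset

lemma aux_sub_le_mul_log (a c : ℝ) (ha : 0 ≤ a) (hc : 0 < c) :
    a - c ≤ a * Real.log (a / c) := by
  rcases eq_or_lt_of_le ha with h | h
  · simp [← h]; positivity
  · have h1 : Real.log (c / a) ≤ c / a - 1 :=
      Real.log_le_sub_one_of_pos (by positivity)
    have h2 : Real.log (c / a) = - Real.log (a / c) := by
      rw [← Real.log_inv]; congr 1; field_simp
    nlinarith [mul_le_mul_of_nonneg_left h1 ha, mul_div_cancel₀ c (ne_of_gt h)]

lemma aux_f_nonneg (p x : ℝ) (hp : 0 < p) (hp1 : p < 1) (hx : x ∈ Set.Icc (0:ℝ) 1) :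
    0 ≤ x * Real.log (x / p) + (1 - x) * Real.log ((1 - x) / (1 - p)) := by
  have h1 := aux_sub_le_mul_log x p hx.1 hp
  have h2 := aux_sub_le_mul_log (1 - x) (1 - p) (by linarith [hx.2]) (by linarith)
  linarith


lemma aux_mul_log_div (a c : ℝ) (ha : 0 ≤ a) (hc : c ≠ 0) :
    a * Real.log (a / c) = a * Real.log a - a * Real.log c := by
  rcases eq_or_lt_of_le ha with h | h
  · simp [← h]
  · rw [Real.log_div (ne_of_gt h) hc]; ring

lemma aux_convex_step (p x b : ℝ) (hp : 0 < p) (hp1 : p < 1)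
    (hx : x ∈ Set.Icc (0:ℝ) 1) (hb0 : 0 ≤ b) (hb1 : b ≤ 1) :
    ((1-b)*x + b) * Real.log (((1-b)*x + b) / p)
      + (1 - ((1-b)*x + b)) * Real.log ((1 - ((1-b)*x + b)) / (1 - p))
    ≤ (1-b) * (x * Real.log (x / p) + (1-x) * Real.log ((1-x) / (1-p)))
      + b * Real.log (1 / p) := by
  obtain ⟨hx0, hx1⟩ := hx
  set y : ℝ := (1-b)*x + b with hy
  have hy0 : 0 ≤ y := by nlinarith
  have hy1 : y ≤ 1 := by nlinarith
  have hc := Real.convexOn_mul_log.2 (Set.mem_Ici.2 hx0) (Set.mem_Ici.2 (by norm_num : (0:ℝ) ≤ 1))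
      (by linarith : (0:ℝ) ≤ 1 - b) hb0 (by ring)
  simp only [smul_eq_mul, mul_one, Real.log_one, mul_zero, add_zero] at hc
  -- hc : y * log y ≤ (1-b) * (x * log x)
  have hc2 := Real.convexOn_mul_log.2 (Set.mem_Ici.2 (by linarith : (0:ℝ) ≤ 1 - x))
      (Set.mem_Ici.2 (le_refl (0:ℝ)))
      (by linarith : (0:ℝ) ≤ 1 - b) hb0 (by ring)
  simp only [smul_eq_mul, mul_zero, add_zero, Real.log_zero, zero_mul] at hc2
  have hyx : (1-b) * (1-x) = 1 - y := by ring
  rw [hyx] at hc2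
  -- hc2 : (1-y) * log (1-y) ≤ (1-b) * ((1-x) * log (1-x))
  rw [aux_mul_log_div y p hy0 (ne_of_gt hp),
      aux_mul_log_div (1-y) (1-p) (by linarith) (by intro h; linarith),
      aux_mul_log_div x p hx0 (ne_of_gt hp),
      aux_mul_log_div (1-x) (1-p) (by linarith) (by intro h; linarith),
      Real.log_div one_ne_zero (ne_of_gt hp), Real.log_one]
  have e1 : ((1-b)*x + b) * Real.log p = (1-b)*(x*Real.log p) + b * Real.log p := by ring
  have e2 : (1 - ((1-b)*x+b)) * Real.log (1-p) = (1-b)*((1-x)*Real.log (1-p)) := by ring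
  have e3 : y = (1-b)*x + b := hy
  have e4 : 1 - y = (1-b)*(1-x) := by rw [hy]; ring
  rw [hy] at *
  linarith [hc, hc2, e1, e2]

lemma aux_prod {ι : Type*} (s : Finset ι) (a : ι → ℝ) (b : ℝ)
    (ha : ∀ i ∈ s, a i ∈ Set.Icc (0:ℝ) 1) (hb0 : 0 ≤ b) (hb1 : b ≤ 1) :
    (1 - b ^ s.card) * ∏ i ∈ s, a i + b ^ s.card ≤ ∏ i ∈ s, (a i + b * (1 - a i)) := by
  induction s using Finset.cons_induction with
  | empty => simp
  | cons j s hj ih =>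
    have haj := ha j (mem_cons_self j s)
    have ha' : ∀ i ∈ s, a i ∈ Set.Icc (0:ℝ) 1 := fun i hi => ha i (mem_cons.2 (Or.inr hi))
    have ih' := ih ha'
    rw [prod_cons, prod_cons, card_cons]
    set P := ∏ i ∈ s, a i with hP
    set Q := ∏ i ∈ s, (a i + b * (1 - a i)) with hQ
    have hP0 : 0 ≤ P := prod_nonneg fun i hi => (ha' i hi).1
    have hP1 : P ≤ 1 := prod_le_one (fun i hi => (ha' i hi).1) (fun i hi => (ha' i hi).2)
    have hbm0 : 0 ≤ b ^ s.card := pow_nonneg hb0 _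
    have hbm1 : b ^ s.card ≤ 1 := pow_le_one₀ hb0 hb1
    have hyj : 0 ≤ a j + b * (1 - a j) := by nlinarith [haj.1, haj.2]
    have h1 : (a j + b * (1 - a j)) * ((1 - b ^ s.card) * P + b ^ s.card)
        ≤ (a j + b * (1 - a j)) * Q := mul_le_mul_of_nonneg_left ih' hyj
    have h2 : (1 - b ^ (s.card + 1)) * (a j * P) + b ^ (s.card + 1)
        ≤ (a j + b * (1 - a j)) * ((1 - b ^ s.card) * P + b ^ s.card) := by
      have hpow : b ^ (s.card + 1) = b * b ^ s.card := by ring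
      rw [hpow]
      nlinarith [mul_nonneg (mul_nonneg (mul_nonneg haj.1 hbm0) (by linarith : (0:ℝ) ≤ 1 - b)) (by linarith : (0:ℝ) ≤ 1 - P),
        mul_nonneg (mul_nonneg (mul_nonneg hb0 (by linarith [haj.2] : (0:ℝ) ≤ 1 - a j)) (by linarith : (0:ℝ) ≤ 1 - b ^ s.card)) hP0]
    calc (1 - b ^ (s.card + 1)) * (a j * P) + b ^ (s.card + 1)
        ≤ (a j + b * (1 - a j)) * ((1 - b ^ s.card) * P + b ^ s.card) := h2
      _ ≤ (a j + b * (1 - a j)) * Q := h1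

lemma aux_card (N : ℕ) :
    ((Finset.univ.filter (fun c : Fin N × Fin N => c.1 < c.2)).card : ℝ)
      = N * (N - 1) / 2 := by
  have h1 : (Finset.univ.filter (fun c : Fin N × Fin N => c.1 < c.2)).card
      = ∑ i : Fin N, (Finset.Ioi i).card := by
    rw [Finset.card_filter, Fintype.sum_prod_type]
    refine Finset.sum_congr rfl fun i _ => ?_
    rw [← Finset.filter_lt_eq_Ioi, Finset.card_filter]
  have h2 : ∑ i : Fin N, (Finset.Ioi i).card = ∑ i : Fin N, (N - 1 - (i:ℕ)) := by
    simp [Fin.card_Ioi]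
  have h3 : ∑ i : Fin N, (N - 1 - (i:ℕ)) = ∑ i ∈ Finset.range N, (N - 1 - i) := by
    rw [Finset.sum_range fun i => N - 1 - i]
  have h4 : ∑ i ∈ Finset.range N, (N - 1 - i) = ∑ i ∈ Finset.range N, i := by
    rw [← Finset.sum_range_reflect]
    refine Finset.sum_congr rfl fun i hi => ?_
    have := Finset.mem_range.1 hi
    omega
  have h5 := Finset.sum_range_id_mul_two N
  have hcard : (Finset.univ.filter (fun c : Fin N × Fin N => c.1 < c.2)).card * 2
      = N * (N - 1) := by rw [h1, h2, h3, h4]; exact h5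
  rcases Nat.eq_zero_or_pos N with h | h
  · subst h
    simp at hcard
    simp [hcard]
  · have hr := congrArg (fun z : ℕ => (z : ℝ)) hcard
    simp only [Nat.cast_mul, Nat.cast_ofNat, Nat.cast_sub h, Nat.cast_one] at hr
    linarith

theorem stmt_16 (N k : ℕ) (hk : 2 ≤ k)
    (E : Finset (Fin k × Fin k)) (hE : ∀ e ∈ E, e.1 < e.2) (hm : 1 ≤ E.card)
    (p : ℝ) (hp : p ∈ Set.Ioo (0:ℝ) 1)
    (n : ℝ) (hn : n = N * (N - 1) / 2)
    (T : Matrix (Fin N) (Fin N) ℝ → ℝ)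
    (hT : ∀ x, T x = (∑ q : Fin k → Fin N, ∏ e ∈ E, x (q e.1) (q e.2))
      / (N : ℝ) ^ (k - 2))
    (Ip : Matrix (Fin N) (Fin N) ℝ → ℝ)
    (hIp : ∀ x, Ip x = ∑ c ∈ Finset.univ.filter (fun c : Fin N × Fin N => c.1 < c.2),
        (x c.1 c.2 * Real.log (x c.1 c.2 / p) +
         (1 - x c.1 c.2) * Real.log ((1 - x c.1 c.2) / (1 - p))))
    (φ : ℝ → ℝ)
    (hφ : ∀ t, φ t = sInf (Ip '' {x : Matrix (Fin N) (Fin N) ℝ |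
        x.IsSymm ∧ (∀ i, x i i = 0) ∧ (∀ i j, x i j ∈ Set.Icc (0:ℝ) 1) ∧
        T x ≥ t * n}))
    (t₀ : ℝ)
    (ht₀ : t₀ = T (fun i j => if i = j then 0 else 1) / n)
    (t δ : ℝ) (hδ : 0 < δ) (htδ : δ < t) (ht : t < t₀) :
    φ (t - δ) ≥ φ t - (δ / (t₀ - t)) ^ ((1 : ℝ) / E.card) * n * Real.log (1 / p) := by
  obtain ⟨hp0, hp1⟩ := hp
  have hlogp : 0 < Real.log (1 / p) :=
    Real.log_pos (by rw [lt_div_iff₀ hp0]; linarith)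
  -- rule out N ≤ 1
  by_cases hNle : N ≤ 1
  · exfalso
    have hn0 : n = 0 := by interval_cases N <;> (rw [hn]; norm_num)
    have ht0 : t₀ = 0 := by rw [ht₀, hn0, div_zero]
    linarith
  push_neg at hNle
  have hN2 : (2:ℝ) ≤ (N:ℝ) := by exact_mod_cast hNle
  have hn0 : (0:ℝ) < n := by rw [hn]; nlinarith
  set One : Matrix (Fin N) (Fin N) ℝ := (fun i j => if i = j then 0 else 1) with hOne
  have hTOne : T One = t₀ * n := by
    rw [ht₀]; rw [div_mul_cancel₀ _ (ne_of_gt hn0)]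
  -- feasibility of One
  have hOneMem : ∀ s : ℝ, s ≤ t₀ → One ∈ {x : Matrix (Fin N) (Fin N) ℝ |
      x.IsSymm ∧ (∀ i, x i i = 0) ∧ (∀ i j, x i j ∈ Set.Icc (0:ℝ) 1) ∧
      T x ≥ s * n} := by
    intro s hs
    refine ⟨Matrix.IsSymm.ext fun i j => ?_, fun i => ?_, fun i j => ?_, ?_⟩
    · simp only [hOne]
      rcases eq_or_ne i j with h | h
      · simp [h]
      · rw [if_neg h, if_neg (Ne.symm h)]
    · simp [hOne]
    · simp only [hOne]
      split_ifs <;> constructor <;> norm_num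
    · rw [hTOne]
      exact mul_le_mul_of_nonneg_right hs (le_of_lt hn0)
  -- value of Ip One
  have hIpOne : Ip One = n * Real.log (1 / p) := by
    rw [hIp]
    have : ∀ c ∈ Finset.univ.filter (fun c : Fin N × Fin N => c.1 < c.2),
        (One c.1 c.2 * Real.log (One c.1 c.2 / p) +
         (1 - One c.1 c.2) * Real.log ((1 - One c.1 c.2) / (1 - p)))
        = Real.log (1 / p) := by
      intro c hc
      have hlt : c.1 < c.2 := (Finset.mem_filter.1 hc).2
      have hne : c.1 ≠ c.2 := ne_of_lt hlt
      simp [hOne, hne]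
    rw [Finset.sum_congr rfl this, Finset.sum_const, nsmul_eq_mul, aux_card, hn]
  -- Ip nonneg
  have hIpnn : ∀ x : Matrix (Fin N) (Fin N) ℝ,
      (∀ i j, x i j ∈ Set.Icc (0:ℝ) 1) → 0 ≤ Ip x := by
    intro x hx
    rw [hIp]
    exact Finset.sum_nonneg fun c _ => aux_f_nonneg p _ hp0 hp1 (hx _ _)
  have hbdd : ∀ s : ℝ, BddBelow (Ip '' {x : Matrix (Fin N) (Fin N) ℝ |
      x.IsSymm ∧ (∀ i, x i i = 0) ∧ (∀ i j, x i j ∈ Set.Icc (0:ℝ) 1) ∧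
      T x ≥ s * n}) := by
    intro s
    refine ⟨0, ?_⟩
    rintro v ⟨x, hx, rfl⟩
    exact hIpnn x hx.2.2.1
  have hφt : φ t ≤ n * Real.log (1 / p) := by
    rw [hφ, ← hIpOne]
    exact csInf_le (hbdd t) (Set.mem_image_of_mem _ (hOneMem t (le_of_lt ht)))
  set b : ℝ := (δ / (t₀ - t)) ^ ((1 : ℝ) / E.card) with hbdef
  have htt : (0:ℝ) < t₀ - t := by linarith
  have hbase0 : 0 < δ / (t₀ - t) := div_pos hδ htt
  have hb0 : 0 < b := Real.rpow_pos_of_pos hbase0 _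
  by_cases hcase : δ ≤ t₀ - t
  · -- main case : b ≤ 1
    have hbase1 : δ / (t₀ - t) ≤ 1 := (div_le_one htt).2 hcase
    have hb1 : b ≤ 1 := Real.rpow_le_one (le_of_lt hbase0) hbase1 (div_nonneg zero_le_one (Nat.cast_nonneg _))
    have hmne : E.card ≠ 0 := by omega
    have hbm : b ^ E.card = δ / (t₀ - t) := by
      rw [hbdef, one_div, Real.rpow_inv_natCast_pow (le_of_lt hbase0) hmne]
    rw [ge_iff_le, hφ (t - δ)]
    apply le_csInf
    · exact ⟨Ip One, Set.mem_image_of_mem _ (hOneMem (t - δ) (by linarith))⟩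
    rintro v ⟨x, hxS, rfl⟩
    obtain ⟨hsym, hdiag, hicc, hTx⟩ := hxS
    obtain ⟨y, hydef⟩ : ∃ y : Matrix (Fin N) (Fin N) ℝ,
        y = fun i j => if i = j then 0 else x i j + b * (1 - x i j) := ⟨_, rfl⟩
    have hyd : ∀ i, y i i = 0 := fun i => by rw [hydef]; exact if_pos rfl
    have hyo : ∀ i j, i ≠ j → y i j = x i j + b * (1 - x i j) := fun i j h => by
      rw [hydef]; exact if_neg h
    -- feasibility of y
    have hyicc : ∀ i j, y i j ∈ Set.Icc (0:ℝ) 1 := by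
      intro i j
      rcases eq_or_ne i j with h | h
      · rw [h, hyd]; exact ⟨le_refl 0, by norm_num⟩
      · rw [hyo i j h]
        obtain ⟨h1, h2⟩ := hicc i j
        constructor
        · nlinarith
        · nlinarith
    have hqkey : ∀ q : Fin k → Fin N,
        (1 - b ^ E.card) * ∏ e ∈ E, x (q e.1) (q e.2)
          + b ^ E.card * ∏ e ∈ E, One (q e.1) (q e.2)
        ≤ ∏ e ∈ E, y (q e.1) (q e.2) := by
      intro q
      by_cases hrep : ∀ e ∈ E, q e.1 ≠ q e.2
      · have hOne1 : ∏ e ∈ E, One (q e.1) (q e.2) = 1 :=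
          Finset.prod_eq_one fun e he => by simp [hOne, hrep e he]
        have hYeq : ∏ e ∈ E, y (q e.1) (q e.2)
            = ∏ e ∈ E, (x (q e.1) (q e.2) + b * (1 - x (q e.1) (q e.2))) :=
          Finset.prod_congr rfl fun e he => hyo _ _ (hrep e he)
        rw [hOne1, mul_one, hYeq]
        exact aux_prod E (fun e => x (q e.1) (q e.2)) b
          (fun e _ => hicc _ _) (le_of_lt hb0) hb1
      · push_neg at hrep
        obtain ⟨e0, he0, heq⟩ := hrep
        have hz1 : ∏ e ∈ E, y (q e.1) (q e.2) = 0 :=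
          Finset.prod_eq_zero he0 (by rw [heq, hyd])
        have hz2 : ∏ e ∈ E, x (q e.1) (q e.2) = 0 :=
          Finset.prod_eq_zero he0 (by rw [heq]; exact hdiag _)
        have hz3 : ∏ e ∈ E, One (q e.1) (q e.2) = 0 :=
          Finset.prod_eq_zero he0 (by rw [heq]; simp [hOne])
        rw [hz1, hz2, hz3]
        simp
    have hNpow : (0:ℝ) < (N : ℝ) ^ (k - 2) := by positivity
    have hTy : (1 - b ^ E.card) * T x + b ^ E.card * T One ≤ T y := by
      rw [hT x, hT One, hT y]
      have hsum : (∑ q : Fin k → Fin N, ((1 - b ^ E.card) * ∏ e ∈ E, x (q e.1) (q e.2)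
          + b ^ E.card * ∏ e ∈ E, One (q e.1) (q e.2)))
          ≤ ∑ q : Fin k → Fin N, ∏ e ∈ E, y (q e.1) (q e.2) :=
        Finset.sum_le_sum fun q _ => hqkey q
      rw [Finset.sum_add_distrib, ← Finset.mul_sum, ← Finset.mul_sum] at hsum
      calc (1 - b ^ E.card) * ((∑ q : Fin k → Fin N, ∏ e ∈ E, x (q e.1) (q e.2)) / (N:ℝ)^(k-2))
            + b ^ E.card * ((∑ q : Fin k → Fin N, ∏ e ∈ E, One (q e.1) (q e.2)) / (N:ℝ)^(k-2))
          = ((1 - b ^ E.card) * (∑ q : Fin k → Fin N, ∏ e ∈ E, x (q e.1) (q e.2))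
            + b ^ E.card * (∑ q : Fin k → Fin N, ∏ e ∈ E, One (q e.1) (q e.2))) / (N:ℝ)^(k-2) := by
            ring
        _ ≤ (∑ q : Fin k → Fin N, ∏ e ∈ E, y (q e.1) (q e.2)) / (N:ℝ)^(k-2) :=
            (div_le_div_iff_of_pos_right hNpow).2 hsum
    have hbm1 : b ^ E.card ≤ 1 := pow_le_one₀ (le_of_lt hb0) hb1
    have hbm0 : 0 < b ^ E.card := pow_pos hb0 _
    have hTyt : T y ≥ t * n := by
      have hδeq : b ^ E.card * (t₀ - t) = δ := by
        rw [hbm]; exact div_mul_cancel₀ _ (ne_of_gt htt)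
      have h1 : (1 - b ^ E.card) * ((t - δ) * n) ≤ (1 - b ^ E.card) * T x :=
        mul_le_mul_of_nonneg_left hTx (by linarith)
      rw [hTOne] at hTy
      nlinarith [mul_pos hbm0 (mul_pos hδ hn0)]
    have hymem : y ∈ {x : Matrix (Fin N) (Fin N) ℝ |
        x.IsSymm ∧ (∀ i, x i i = 0) ∧ (∀ i j, x i j ∈ Set.Icc (0:ℝ) 1) ∧
        T x ≥ t * n} := by
      refine ⟨Matrix.IsSymm.ext fun i j => ?_, hyd, hyicc, hTyt⟩
      rcases eq_or_ne i j with h | h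
      · rw [h]
      · rw [hyo j i (Ne.symm h), hyo i j h, hsym.apply i j]
    have h1 : φ t ≤ Ip y := by
      rw [hφ]
      exact csInf_le (hbdd t) (Set.mem_image_of_mem _ hymem)
    have h2 : Ip y ≤ Ip x + n * (b * Real.log (1 / p)) := by
      rw [hIp y, hIp x]
      have hterm : ∀ c ∈ Finset.univ.filter (fun c : Fin N × Fin N => c.1 < c.2),
          (y c.1 c.2 * Real.log (y c.1 c.2 / p) +
           (1 - y c.1 c.2) * Real.log ((1 - y c.1 c.2) / (1 - p)))
          ≤ (x c.1 c.2 * Real.log (x c.1 c.2 / p) +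
           (1 - x c.1 c.2) * Real.log ((1 - x c.1 c.2) / (1 - p)))
            + b * Real.log (1 / p) := by
        intro c hc
        have hlt : c.1 < c.2 := (Finset.mem_filter.1 hc).2
        have hne : c.1 ≠ c.2 := ne_of_lt hlt
        have hxm := hicc c.1 c.2
        have hyval : y c.1 c.2 = (1 - b) * x c.1 c.2 + b := by
          rw [hyo _ _ hne]; ring
        have hcv := aux_convex_step p (x c.1 c.2) b hp0 hp1 hxm (le_of_lt hb0) hb1
        have hfnn := aux_f_nonneg p (x c.1 c.2) hp0 hp1 hxm
        rw [hyval]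
        linarith [hcv, mul_nonneg (le_of_lt hb0) hfnn]
      calc (∑ c ∈ Finset.univ.filter (fun c : Fin N × Fin N => c.1 < c.2),
            (y c.1 c.2 * Real.log (y c.1 c.2 / p) +
             (1 - y c.1 c.2) * Real.log ((1 - y c.1 c.2) / (1 - p))))
          ≤ ∑ c ∈ Finset.univ.filter (fun c : Fin N × Fin N => c.1 < c.2),
            ((x c.1 c.2 * Real.log (x c.1 c.2 / p) +
             (1 - x c.1 c.2) * Real.log ((1 - x c.1 c.2) / (1 - p)))
              + b * Real.log (1 / p)) := Finset.sum_le_sum hterm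
        _ = (∑ c ∈ Finset.univ.filter (fun c : Fin N × Fin N => c.1 < c.2),
            (x c.1 c.2 * Real.log (x c.1 c.2 / p) +
             (1 - x c.1 c.2) * Real.log ((1 - x c.1 c.2) / (1 - p))))
            + ((Finset.univ.filter (fun c : Fin N × Fin N => c.1 < c.2)).card : ℝ)
              * (b * Real.log (1 / p)) := by
            rw [Finset.sum_add_distrib, Finset.sum_const, nsmul_eq_mul]
        _ = _ := by rw [aux_card, ← hn]
    linarith
  · -- trivial case : b ≥ 1
    push_neg at hcase
    have hb1 : 1 ≤ b :=
      Real.one_le_rpow ((le_div_iff₀ htt).2 (by linarith)) (div_nonneg zero_le_one (Nat.cast_nonneg _))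
    have hφtδ : 0 ≤ φ (t - δ) := by
      rw [hφ]
      apply le_csInf
      · exact ⟨Ip One, Set.mem_image_of_mem _ (hOneMem (t - δ) (by linarith))⟩
      rintro v ⟨x, hx, rfl⟩
      exact hIpnn x hx.2.2.1
    have hkey : 0 ≤ (b - 1) * (n * Real.log (1 / p)) :=
      mul_nonneg (by linarith) (le_of_lt (mul_pos hn0 hlogp))
    have hexp : (b - 1) * (n * Real.log (1 / p))
        = b * n * Real.log (1 / p) - n * Real.log (1 / p) := by ring
    rw [ge_iff_le]
    linarith
end

section
/- For the function f(x) := (1/n) ∑_{i,j ∈ ℤ/nℤ} x_i x_{i+j} x_{i+2j} on [0,1]^{ℤ/nℤ}, define φ_p(t) := inf{ I_p(x) : x ∈ [0,1]^{ℤ/nℤ}, f(x) ≥ tn }. Then for any 0 < δ < t < 1, φ_p(t−δ) ≥ φ_p(t) − (δ/(1−t))^{1/3} · n log(1/p). -/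
open Real Set

lemma aux_mul_log_div_s17 (z p : ℝ) (hz : 0 ≤ z) (hp : 0 < p) :
    z * Real.log (z / p) = z * Real.log z - z * Real.log p := by
  rcases eq_or_lt_of_le hz with h | h
  · simp [← h]
  · rw [Real.log_div h.ne' hp.ne']; ring

lemma aux_g_nonneg (p a : ℝ) (hp : p ∈ Set.Ioo (0:ℝ) 1) (ha : a ∈ Set.Icc (0:ℝ) 1) :
    0 ≤ a * Real.log (a / p) + (1 - a) * Real.log ((1 - a) / (1 - p)) := by
  obtain ⟨hp0, hp1⟩ := hp
  obtain ⟨ha0, ha1⟩ := ha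
  have h1p : (0:ℝ) < 1 - p := by linarith
  have key : ∀ z q : ℝ, 0 ≤ z → 0 < q → z - q ≤ z * Real.log (z / q) := by
    intro z q hz hq
    rcases eq_or_lt_of_le hz with h | h
    · simp [← h]; linarith
    · have := Real.log_le_sub_one_of_pos (show 0 < q / z by positivity)
      have hlog : Real.log (z / q) = - Real.log (q / z) := by
        rw [← Real.log_inv]; congr 1; field_simp
      rw [hlog]
      have h2 : -Real.log (q/z) ≥ 1 - q/z := by linarith
      calc z - q = z * (1 - q / z) := by field_simp
        _ ≤ z * (-Real.log (q/z)) := mul_le_mul_of_nonneg_left h2 hz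
  have hk1 := key a p ha0 hp0
  have hk2 := key (1-a) (1-p) (by linarith) h1p
  linarith

lemma aux_g_step (p a ε : ℝ) (hp : p ∈ Set.Ioo (0:ℝ) 1) (ha : a ∈ Set.Icc (0:ℝ) 1)
    (hε : ε ∈ Set.Icc (0:ℝ) 1) :
    (a + ε * (1 - a)) * Real.log ((a + ε * (1 - a)) / p)
      + (1 - (a + ε * (1 - a))) * Real.log ((1 - (a + ε * (1 - a))) / (1 - p))
    ≤ (a * Real.log (a / p) + (1 - a) * Real.log ((1 - a) / (1 - p)))
      + ε * Real.log (1 / p) := by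
  obtain ⟨hp0, hp1⟩ := hp
  obtain ⟨ha0, ha1⟩ := ha
  obtain ⟨hε0, hε1⟩ := hε
  have h1p : (0:ℝ) < 1 - p := by linarith
  set b := a + ε * (1 - a) with hb
  have hb0 : 0 ≤ b := by nlinarith
  have hb1 : b ≤ 1 := by nlinarith
  have H1 : b * Real.log b ≤ (1 - ε) * (a * Real.log a) + ε * ((1:ℝ) * Real.log 1) := by
    have := Real.convexOn_mul_log.2 (Set.mem_Ici.2 ha0) (Set.mem_Ici.2 (zero_le_one))
      (by linarith : (0:ℝ) ≤ 1 - ε) hε0 (by ring)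
    have hbe : (1 - ε) • a + ε • (1:ℝ) = b := by simp [hb]; ring
    rw [hbe] at this
    simpa using this
  have H2 : (1-b) * Real.log (1-b) ≤ (1 - ε) * ((1-a) * Real.log (1-a)) + ε * ((0:ℝ) * Real.log 0) := by
    have := Real.convexOn_mul_log.2 (Set.mem_Ici.2 (by linarith : (0:ℝ) ≤ 1 - a))
      (Set.mem_Ici.2 (le_refl (0:ℝ)))
      (by linarith : (0:ℝ) ≤ 1 - ε) hε0 (by ring)
    have hbe : (1 - ε) • (1 - a) + ε • (0:ℝ) = 1 - b := by simp [hb]; ring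
    rw [hbe] at this
    simpa using this
  simp only [Real.log_one, Real.log_zero, mul_zero, zero_mul, mul_one, add_zero] at H1 H2
  have e1 := aux_mul_log_div_s17 b p hb0 hp0
  have e2 := aux_mul_log_div_s17 (1-b) (1-p) (by linarith) h1p
  have e3 := aux_mul_log_div_s17 a p ha0 hp0
  have e4 := aux_mul_log_div_s17 (1-a) (1-p) (by linarith) h1p
  have hlog1p : Real.log (1/p) = - Real.log p := by rw [one_div, Real.log_inv]
  have hgnn := aux_g_nonneg p a ⟨hp0, hp1⟩ ⟨ha0, ha1⟩
  have hstep : b * Real.log (b / p) + (1 - b) * Real.log ((1-b)/(1-p))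
      ≤ (1-ε) * (a * Real.log (a/p) + (1-a) * Real.log ((1-a)/(1-p))) + ε * Real.log (1/p) := by
    rw [e1, e2, hlog1p]
    have hrw : (1-ε) * (a * Real.log (a/p) + (1-a) * Real.log ((1-a)/(1-p)))
        = (1-ε) * ((a * Real.log a - a * Real.log p) + ((1-a) * Real.log (1-a) - (1-a) * Real.log (1-p))) := by
      rw [e3, e4]
    rw [hrw]
    have hb' : b = (1-ε)*a + ε := by rw [hb]; ring
    have hbp : b * Real.log p = (1-ε) * (a * Real.log p) + ε * Real.log p := by
      rw [hb']; ring
    have hbq : (1-b) * Real.log (1-p) = (1-ε) * ((1-a) * Real.log (1-p)) := by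
      rw [hb']; ring
    nlinarith [H1, H2, hbp, hbq]
  nlinarith [hstep, hgnn]

lemma aux_prod_s17 (a b c ε : ℝ) (ha : a ∈ Set.Icc (0:ℝ) 1) (hb : b ∈ Set.Icc (0:ℝ) 1)
    (hc : c ∈ Set.Icc (0:ℝ) 1) (hε : ε ∈ Set.Icc (0:ℝ) 1) :
    (1 - ε^3) * (a * b * c) + ε^3 ≤ (a + ε*(1-a)) * (b + ε*(1-b)) * (c + ε*(1-c)) := by
  obtain ⟨ha0, ha1⟩ := ha; obtain ⟨hb0, hb1⟩ := hb; obtain ⟨hc0, hc1⟩ := hc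
  obtain ⟨he0, he1⟩ := hε
  have he1' : (0:ℝ) ≤ 1 - ε := by linarith
  have hab : (0:ℝ) ≤ 1 - b*c := by nlinarith
  have hbc : (0:ℝ) ≤ 1 - c*a := by nlinarith
  have hca : (0:ℝ) ≤ 1 - a*b := by nlinarith
  have h1 : (0:ℝ) ≤ ε * (1-ε)^2 * (a * b * (1 - c)) :=
    mul_nonneg (by positivity) (mul_nonneg (mul_nonneg ha0 hb0) (by linarith))
  have h2 : (0:ℝ) ≤ ε * (1-ε)^2 * (b * c * (1 - a)) :=
    mul_nonneg (by positivity) (mul_nonneg (mul_nonneg hb0 hc0) (by linarith))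
  have h3 : (0:ℝ) ≤ ε * (1-ε)^2 * (c * a * (1 - b)) :=
    mul_nonneg (by positivity) (mul_nonneg (mul_nonneg hc0 ha0) (by linarith))
  have h4 : (0:ℝ) ≤ ε^2 * (1-ε) * (a * (1 - b*c)) :=
    mul_nonneg (mul_nonneg (by positivity) he1') (mul_nonneg ha0 hab)
  have h5 : (0:ℝ) ≤ ε^2 * (1-ε) * (b * (1 - c*a)) :=
    mul_nonneg (mul_nonneg (by positivity) he1') (mul_nonneg hb0 hbc)
  have h6 : (0:ℝ) ≤ ε^2 * (1-ε) * (c * (1 - a*b)) :=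
    mul_nonneg (mul_nonneg (by positivity) he1') (mul_nonneg hc0 hca)
  nlinarith [h1, h2, h3, h4, h5, h6]

set_option maxHeartbeats 1000000 in
theorem stmt_17 (n : ℕ) [NeZero n]
    (p : ℝ) (hp : p ∈ Set.Ioo (0:ℝ) 1)
    (f : (ZMod n → ℝ) → ℝ)
    (hf : ∀ x, f x = (1 / (n : ℝ)) * ∑ i : ZMod n, ∑ j : ZMod n,
        x i * x (i + j) * x (i + 2 * j))
    (Ip : (ZMod n → ℝ) → ℝ)
    (hIp : ∀ x, Ip x = ∑ i : ZMod n,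
        (x i * Real.log (x i / p) + (1 - x i) * Real.log ((1 - x i) / (1 - p))))
    (φ : ℝ → ℝ)
    (hφ : ∀ t, φ t = sInf (Ip '' {x : ZMod n → ℝ |
        (∀ i, x i ∈ Set.Icc (0:ℝ) 1) ∧ f x ≥ t * n}))
    (t δ : ℝ) (hδ : 0 < δ) (htδ : δ < t) (ht : t < 1) :
    φ (t - δ) ≥ φ t - (δ / (1 - t)) ^ ((1 : ℝ) / 3) * n * Real.log (1 / p) := by
  obtain ⟨hp0, hp1⟩ := hp
  have hn0 : 0 < (n:ℝ) := by exact_mod_cast Nat.pos_of_ne_zero (NeZero.ne n)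
  have hcard : (Fintype.card (ZMod n) : ℝ) = n := by rw [ZMod.card]
  have hlogp : 0 ≤ Real.log (1/p) := Real.log_nonneg (by rw [le_div_iff₀ hp0]; linarith)
  set ε : ℝ := (δ / (1 - t)) ^ ((1:ℝ)/3) with hε
  have h1t : (0:ℝ) < 1 - t := by linarith
  have hbase : (0:ℝ) < δ / (1 - t) := by positivity
  have hε0 : 0 < ε := Real.rpow_pos_of_pos hbase _
  have he3 : ε ^ 3 = δ / (1 - t) := by
    rw [hε, ← Real.rpow_natCast ((δ / (1-t)) ^ ((1:ℝ)/3)) 3, ← Real.rpow_mul hbase.le]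
    norm_num
  -- the all-ones vector
  set o : ZMod n → ℝ := fun _ => 1 with ho
  have hfo : f o = n := by
    rw [hf]; simp [ho, hcard]
    field_simp
  have homem : ∀ s : ℝ, s ≤ 1 → o ∈ {x : ZMod n → ℝ |
      (∀ i, x i ∈ Set.Icc (0:ℝ) 1) ∧ f x ≥ s * n} := by
    intro s hs
    refine ⟨fun i => ⟨zero_le_one, le_refl 1⟩, ?_⟩
    rw [hfo]
    nlinarith
  have hIpo : Ip o = n * Real.log (1/p) := by
    rw [hIp]; simp [ho, hcard]
  -- lower bound 0 on all Ip values over feasible sets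
  have hlb : ∀ s : ℝ, ∀ v ∈ Ip '' {x : ZMod n → ℝ |
      (∀ i, x i ∈ Set.Icc (0:ℝ) 1) ∧ f x ≥ s * n}, (0:ℝ) ≤ v := by
    rintro s v ⟨x, ⟨hx1, -⟩, rfl⟩
    rw [hIp]
    exact Finset.sum_nonneg fun i _ => aux_g_nonneg p (x i) ⟨hp0, hp1⟩ (hx1 i)
  have hbdd : ∀ s : ℝ, BddBelow (Ip '' {x : ZMod n → ℝ |
      (∀ i, x i ∈ Set.Icc (0:ℝ) 1) ∧ f x ≥ s * n}) :=
    fun s => ⟨0, fun v hv => hlb s v hv⟩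
  by_cases hεbig : 1 ≤ ε
  · -- trivial case: RHS ≤ 0 ≤ LHS
    have h1 : φ (t - δ) ≥ 0 := by
      rw [hφ]
      apply le_csInf ⟨Ip o, Set.mem_image_of_mem _ (homem (t - δ) (by linarith))⟩
      exact fun v hv => hlb _ v hv
    have h2 : φ t ≤ n * Real.log (1/p) := by
      rw [hφ, ← hIpo]
      exact csInf_le (hbdd t) (Set.mem_image_of_mem _ (homem t ht.le))
    have : ε * n * Real.log (1/p) ≥ n * Real.log (1/p) := by
      have : (1:ℝ) * (n * Real.log (1/p)) ≤ ε * (n * Real.log (1/p)) :=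
        mul_le_mul_of_nonneg_right hεbig (by positivity)
      nlinarith
    linarith
  · push_neg at hεbig
    have hεI : ε ∈ Set.Icc (0:ℝ) 1 := ⟨hε0.le, hεbig.le⟩
    rw [hφ (t - δ)]
    rw [ge_iff_le]
    apply le_csInf ⟨Ip o, Set.mem_image_of_mem _ (homem (t - δ) (by linarith))⟩
    rintro v ⟨x, ⟨hx1, hx2⟩, rfl⟩
    -- define the perturbed vector
    set y : ZMod n → ℝ := fun i => x i + ε * (1 - x i) with hy
    have hy1 : ∀ i, y i ∈ Set.Icc (0:ℝ) 1 := by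
      intro i
      obtain ⟨h1, h2⟩ := hx1 i
      constructor
      · simp only [hy]; nlinarith
      · simp only [hy]; nlinarith
    have hfy : f y ≥ t * n := by
      rw [hf] at hx2 ⊢
      have hterm : ∀ i j : ZMod n,
          (1 - ε^3) * (x i * x (i+j) * x (i+2*j)) + ε^3
            ≤ y i * y (i+j) * y (i+2*j) :=
        fun i j => aux_prod_s17 _ _ _ _ (hx1 i) (hx1 (i+j)) (hx1 (i+2*j)) hεI
      have hsum : ∑ i : ZMod n, ∑ j : ZMod n,
          ((1 - ε^3) * (x i * x (i+j) * x (i+2*j)) + ε^3)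
          ≤ ∑ i : ZMod n, ∑ j : ZMod n, y i * y (i+j) * y (i+2*j) :=
        Finset.sum_le_sum fun i _ => Finset.sum_le_sum fun j _ => hterm i j
      have hexp : ∑ i : ZMod n, ∑ j : ZMod n,
          ((1 - ε^3) * (x i * x (i+j) * x (i+2*j)) + ε^3)
          = (1 - ε^3) * (∑ i : ZMod n, ∑ j : ZMod n, x i * x (i+j) * x (i+2*j))
            + (n:ℝ)^2 * ε^3 := by
        simp [Finset.sum_add_distrib, Finset.mul_sum, hcard]
        ring
      set Sx := ∑ i : ZMod n, ∑ j : ZMod n, x i * x (i+j) * x (i+2*j) with hSx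
      set Sy := ∑ i : ZMod n, ∑ j : ZMod n, y i * y (i+j) * y (i+2*j) with hSy
      clear_value Sx Sy
      have hSxge : Sx ≥ (t - δ) * n^2 := by
        have := hx2
        rw [ge_iff_le, div_mul_eq_mul_div, le_div_iff₀ hn0] at this
        nlinarith
      have hSyge : Sy ≥ t * n^2 := by
        have h1 : (1 - ε^3) * Sx + (n:ℝ)^2 * ε^3 ≤ Sy := by
          rw [← hexp]; exact hsum
        have hε31 : ε^3 < 1 := pow_lt_one₀ hε0.le hεbig (by norm_num)
        have h2 : (1 - ε^3) * ((t - δ) * n^2) ≤ (1 - ε^3) * Sx :=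
          mul_le_mul_of_nonneg_left hSxge (by linarith)
        have h3 : (1 - ε^3) * ((t - δ) * n^2) + (n:ℝ)^2 * ε^3 ≥ t * n^2 := by
          rw [he3]
          have key : (1 - δ/(1-t)) * (t - δ) + δ/(1-t) ≥ t := by
            rw [ge_iff_le, ← sub_nonneg]
            have : (1 - δ/(1-t)) * (t - δ) + δ/(1-t) - t = δ^2/(1-t) := by
              field_simp; ring
            rw [this]; positivity
          nlinarith [sq_nonneg (n:ℝ)]
        linarith
      rw [ge_iff_le, div_mul_eq_mul_div, le_div_iff₀ hn0]
      nlinarith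
    have hIpy : Ip y ≤ Ip x + ε * n * Real.log (1/p) := by
      rw [hIp y, hIp x]
      have : ∑ i : ZMod n, (y i * Real.log (y i / p) + (1 - y i) * Real.log ((1 - y i) / (1 - p)))
          ≤ ∑ i : ZMod n, ((x i * Real.log (x i / p) + (1 - x i) * Real.log ((1 - x i) / (1 - p)))
              + ε * Real.log (1/p)) :=
        Finset.sum_le_sum fun i _ => aux_g_step p (x i) ε ⟨hp0, hp1⟩ (hx1 i) hεI
      have h2 : ∑ i : ZMod n, ((x i * Real.log (x i / p) + (1 - x i) * Real.log ((1 - x i) / (1 - p)))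
              + ε * Real.log (1/p))
          = (∑ i : ZMod n, (x i * Real.log (x i / p) + (1 - x i) * Real.log ((1 - x i) / (1 - p))))
            + ε * n * Real.log (1/p) := by
        rw [Finset.sum_add_distrib, Finset.sum_const, Finset.card_univ, nsmul_eq_mul, hcard]
        ring
      rw [h2] at this
      exact this
    have hφt : φ t ≤ Ip y := by
      rw [hφ t]
      exact csInf_le (hbdd t) (Set.mem_image_of_mem _ ⟨hy1, hfy⟩)
    have : φ t ≤ Ip x + ε * n * Real.log (1/p) := le_trans hφt hIpy
    linarith
end
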